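/- arXiv:1504.01283 — 4 statements merged into one kernel-verified Lean document; each statement's English description precedes it below -/
import Mathlib

section
/- For every n, k, and σ ∈ Σ^B(n), the number of signed permutations w ∈ B_n with sDes(w⁻¹) = σ and finv(w) = k equals the number of w ∈ B_n with sDes(w⁻¹) = σ and fmaj(w) = k. -/
open Finset

/-- An element of the hyperoctahedral group `B_n` is modeled as a permutation `w` of
`Fin n × Bool` (the pair `(i, b)` representing the letter `i+1`, barred iff `b = true`)
commuting with the bar involution. -/
def IsSignedPerm {n : ℕ} (w : Equiv.Perm (Fin n × Bool)) : Prop :=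
  ∀ p : Fin n × Bool, w (p.1, !p.2) = ((w p).1, !(w p).2)

/-- The letter `w(p+1)` of the signed permutation `w`, written in one-line notation, as a
pair (absolute value minus 1, barred?); junk value for `p ≥ n`. -/
def oneLine {n : ℕ} (w : Equiv.Perm (Fin n × Bool)) (p : ℕ) : ℕ × Bool :=
  if h : p < n then (((w (⟨p, h⟩, false)).1 : ℕ), (w (⟨p, h⟩, false)).2) else (0, false)

/-- The rank of a letter in the total order `1̄ <_r ⋯ <_r n̄ <_r 1 <_r ⋯ <_r n`. -/
def rOrd (n : ℕ) (v : ℕ × Bool) : ℕ :=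
  if v.2 then v.1 else n + v.1

/-- The signed (colored) descent set `sDes(w)` of a signed permutation, encoded as a word
`ℕ → Option Bool`: position `p` (0-based, representing `s = p+1`) carries `some b` iff
`s ∈ S`, where `S` consists of `n` together with all `s ∈ [n−1]` such that either
`w(s) >_r w(s+1)` or `w(s)` is barred and `w(s+1)` is unbarred, and `b = true` iff
`w(s)` is barred. -/
def sDesPerm {n : ℕ} (w : Equiv.Perm (Fin n × Bool)) : ℕ → Option Bool := fun p =>
  if p + 1 = n then some (oneLine w p).2
  else if p + 1 < n ∧ (rOrd n (oneLine w (p + 1)) < rOrd n (oneLine w p) ∨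
      ((oneLine w p).2 = true ∧ (oneLine w (p + 1)).2 = false))
    then some (oneLine w p).2 else none

/-- The major index of `w ∈ B_n`: the sum of the (1-based) descent positions of
`(w(1),...,w(n))` with respect to the order `<_r`. -/
def majB {n : ℕ} (w : Equiv.Perm (Fin n × Bool)) : ℕ :=
  ∑ p ∈ Finset.range (n - 1),
    if rOrd n (oneLine w (p + 1)) < rOrd n (oneLine w p) then p + 1 else 0

/-- The number of inversions of `(w(1),...,w(n))` with respect to the order `<_r`. -/
def invB {n : ℕ} (w : Equiv.Perm (Fin n × Bool)) : ℕ :=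
  ((Finset.range n ×ˢ Finset.range n).filter
    fun pq => pq.1 < pq.2 ∧ rOrd n (oneLine w pq.2) < rOrd n (oneLine w pq.1)).card

/-- The number of barred entries of `w`. -/
def barB {n : ℕ} (w : Equiv.Perm (Fin n × Bool)) : ℕ :=
  ((Finset.range n).filter fun p => (oneLine w p).2 = true).card

/-- The flag-major index `fmaj(w) = 2·maj(w) + bar(w)`. -/
def fmajB {n : ℕ} (w : Equiv.Perm (Fin n × Bool)) : ℕ := 2 * majB w + barB w

/-- The flag-inversion number `finv(w) = 2·inv(w) + bar(w)`. -/
def finvB {n : ℕ} (w : Equiv.Perm (Fin n × Bool)) : ℕ := 2 * invB w + barB w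

namespace FW

/-- inversions of a list of naturals -/
def inv : List ℕ → ℕ
  | [] => 0
  | a :: t => t.countP (fun b => decide (b < a)) + inv t

/-- major index of the *reversed* word -/
def majA : List ℕ → ℕ
  | [] => 0
  | [_] => 0
  | x :: y :: rs => (if x < y then rs.length + 1 else 0) + majA (y :: rs)

def cross : List ℕ → List ℕ → ℕ
  | _, [] => 0
  | a, y :: b => a.countP (fun z => decide (y < z)) + cross a b

lemma cross_nil_left : ∀ b : List ℕ, cross [] b = 0
  | [] => rfl
  | y :: b => by simp [cross, cross_nil_left b]

lemma cross_cons (z : ℕ) (a b : List ℕ) :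
    cross (z :: a) b = cross a b + b.countP (fun y => decide (y < z)) := by
  induction b with
  | nil => simp [cross]
  | cons y b ih =>
      simp only [cross, ih, List.countP_cons]
      ring

lemma cross_perm_left {a a' : List ℕ} (h : a.Perm a') (b : List ℕ) :
    cross a b = cross a' b := by
  induction b with
  | nil => rfl
  | cons y b ih => simp only [cross, ih, h.countP_eq]

lemma cross_perm_right (a : List ℕ) {b b' : List ℕ} (h : b.Perm b') :
    cross a b = cross a b' := by
  induction h with
  | nil => rfl
  | cons x h ih => simp only [cross, ih]
  | swap x y l => simp only [cross]; omega
  | trans h1 h2 ih1 ih2 => omega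

lemma inv_append (a b : List ℕ) : inv (a ++ b) = inv a + inv b + cross a b := by
  induction a with
  | nil => simp [inv, cross_nil_left]
  | cons z a ih =>
      simp only [List.cons_append, inv, List.countP_append, List.append_eq, ih, cross_cons]
      omega

lemma inv_snoc (l : List ℕ) (x : ℕ) :
    inv (l ++ [x]) = inv l + l.countP (fun a => decide (x < a)) := by
  rw [inv_append]
  simp [inv, cross]

lemma countP_split (p : ℕ → Bool) (l : List ℕ) :
    l.countP p + l.countP (fun a => !p a) = l.length := by
  induction l with
  | nil => simp
  | cons a t ih =>
      simp only [List.countP_cons, List.length_cons]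
      cases h : p a <;> simp [h] <;> omega

/-- one Foata step with fuel -/
def gamF : ℕ → (ℕ → Bool) → List ℕ → List ℕ
  | 0, _, l => l
  | k+1, p, l =>
    match l.dropWhile (fun a => !p a) with
    | [] => l
    | c :: suf => (c :: l.takeWhile (fun a => !p a)) ++ gamF k p suf

lemma gamF_succ_cons {p : ℕ → Bool} {l : List ℕ} {c : ℕ} {suf : List ℕ} (k : ℕ)
    (h : l.dropWhile (fun a => !p a) = c :: suf) :
    gamF (k+1) p l = (c :: l.takeWhile (fun a => !p a)) ++ gamF k p suf := by
  simp [gamF, h]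

lemma gamF_succ_nil {p : ℕ → Bool} {l : List ℕ} (k : ℕ)
    (h : l.dropWhile (fun a => !p a) = []) : gamF (k+1) p l = l := by
  simp [gamF, h]

lemma gamF_nil (k : ℕ) (p : ℕ → Bool) : gamF k p [] = [] := by
  cases k <;> simp [gamF]

lemma dropWhile_head_false {q : ℕ → Bool} (l : List ℕ) :
    ∀ {c : ℕ} {suf : List ℕ}, l.dropWhile q = c :: suf → q c = false := by
  induction l with
  | nil => intro c suf h; simp at h
  | cons a t ih =>
      intro c suf h
      by_cases ha : q a = true
      · rw [List.dropWhile_cons_of_pos ha] at h; exact ih h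
      · rw [List.dropWhile_cons_of_neg ha] at h
        cases h; simpa using ha

lemma gamF_perm (p : ℕ → Bool) : ∀ (k : ℕ) (l : List ℕ), l.length ≤ k →
    (gamF k p l).Perm l := by
  intro k
  induction k with
  | zero => intro l _; exact List.Perm.refl l
  | succ k ih =>
      intro l hl
      cases h : l.dropWhile (fun a => !p a) with
      | nil => rw [gamF_succ_nil k h]
      | cons c suf =>
          rw [gamF_succ_cons k h]
          have hsplit : l.takeWhile (fun a => !p a) ++ (c :: suf) = l :=
            (h ▸ List.takeWhile_append_dropWhile (p := fun a => !p a) (l := l))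
          have hlen : suf.length ≤ k := by
            have := congrArg List.length hsplit
            simp at this; omega
          have e1 : (c :: l.takeWhile (fun a => !p a)) ++ gamF k p suf
              = c :: (l.takeWhile (fun a => !p a) ++ gamF k p suf) := by simp
          rw [e1]
          have h2 := List.Perm.append_left (l.takeWhile (fun a => !p a))
            ((ih suf hlen).cons c)
          rw [hsplit] at h2
          exact List.Perm.trans List.perm_middle.symm h2



lemma gamF_countP (p q : ℕ → Bool) (k : ℕ) (l : List ℕ) (h : l.length ≤ k) :
    (gamF k p l).countP q = l.countP q := (gamF_perm p k l h).countP_eq q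

lemma gamF_length (p : ℕ → Bool) (k : ℕ) (l : List ℕ) (h : l.length ≤ k) :
    (gamF k p l).length = l.length := (gamF_perm p k l h).length_eq

lemma gamF_filter (p q : ℕ → Bool) (hpq : ∀ y z, q y = true → q z = true → p y = p z) :
    ∀ (k : ℕ) (l : List ℕ), l.length ≤ k → (gamF k p l).filter q = l.filter q := by
  intro k
  induction k with
  | zero => intro l _; rfl
  | succ k ih =>
      intro l hl
      cases h : l.dropWhile (fun a => !p a) with
      | nil => rw [gamF_succ_nil k h]
      | cons c suf =>
          rw [gamF_succ_cons k h]
          have hsplit : l.takeWhile (fun a => !p a) ++ (c :: suf) = l :=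
            (h ▸ List.takeWhile_append_dropWhile (p := fun a => !p a) (l := l))
          set A := l.takeWhile (fun a => !p a) with hAdef
          have hlen : suf.length ≤ k := by
            have := congrArg List.length hsplit
            simp at this; omega
          have hA : ∀ a ∈ A, p a = false := by
            intro a ha
            have := List.mem_takeWhile_imp ha
            simpa using this
          have hc : p c = true := by
            have := dropWhile_head_false l h
            simpa using this
          conv_rhs => rw [← hsplit]
          rw [List.filter_append, List.filter_append, List.filter_cons, List.filter_cons]
          by_cases hqc : q c = true
          · have hfA : A.filter q = [] := by
              rw [List.filter_eq_nil_iff]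
              intro a ha hqa
              have := hpq c a hqc hqa
              rw [hc, hA a ha] at this
              exact Bool.true_eq_false.mp this
            rw [hfA, ih suf hlen]
            simp [hqc]
          · rw [ih suf hlen]
            simp [hqc]

lemma gamF_inv_lo (p : ℕ → Bool) (Hlo : ∀ a b, p a = true → p b = false → a < b) :
    ∀ (k : ℕ) (l : List ℕ), l.length ≤ k →
      (∀ y, l.getLast? = some y → p y = true) →
      inv l = inv (gamF k p l) + l.countP (fun a => !p a) := by
  intro k
  induction k with
  | zero =>
      intro l hlen _
      have : l = [] := List.length_eq_zero_iff.mp (Nat.le_zero.mp hlen)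
      subst this; simp [inv, gamF]
  | succ k ih =>
      intro l hl hlast
      cases h : l.dropWhile (fun a => !p a) with
      | nil =>
          rcases List.eq_nil_or_concat l with rfl | ⟨l', y, rfl⟩
          · simp [inv, gamF_nil]
          · have hy : p y = true := hlast y (by simp [List.concat_eq_append])
            have hall := List.dropWhile_eq_nil_iff.mp h y (by simp [List.concat_eq_append])
            rw [hy] at hall; simp at hall
      | cons c suf =>
          rw [gamF_succ_cons k h]
          have hsplit : l.takeWhile (fun a => !p a) ++ (c :: suf) = l :=
            (h ▸ List.takeWhile_append_dropWhile (p := fun a => !p a) (l := l))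
          set A := l.takeWhile (fun a => !p a) with hAdef
          set G := gamF k p suf with hGdef
          have hlen : suf.length ≤ k := by
            have := congrArg List.length hsplit
            simp at this; omega
          have hA : ∀ a ∈ A, p a = false := by
            intro a ha
            have := List.mem_takeWhile_imp ha
            simpa using this
          have hc : p c = true := by
            have := dropWhile_head_false l h
            simpa using this
          have hlast' : ∀ y, suf.getLast? = some y → p y = true := by
            intro y hy
            apply hlast
            rw [← hsplit]
            cases suf with
            | nil => simp at hy
            | cons s t =>
                rw [List.getLast?_append_of_ne_nil _ (by simp)]
                rw [List.getLast?_cons_cons]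
                exact hy
          have ihsuf := ih suf hlen hlast'
          rw [← hGdef] at ihsuf
          have hGperm : G.Perm suf := gamF_perm p k suf hlen
          -- inv l
          have e1 : inv l = inv A + (suf.countP (fun b => decide (b < c)) + inv suf)
              + (A.countP (fun z => decide (c < z)) + cross A suf) := by
            conv_lhs => rw [← hsplit]
            rw [inv_append]
            simp only [inv, cross]
          have e2 : inv ((c :: A) ++ G)
              = (A.countP (fun b => decide (b < c)) + inv A) + inv G
                + (cross A G + G.countP (fun y => decide (y < c))) := by
            rw [inv_append, cross_cons]
            simp only [inv]
            try omega
          have e3 : cross A G = cross A suf := cross_perm_right A hGperm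
          have e4 : G.countP (fun y => decide (y < c)) = suf.countP (fun y => decide (y < c)) :=
            hGperm.countP_eq _
          have e5 : A.countP (fun z => decide (c < z)) = A.length := by
            rw [List.countP_eq_length]
            intro a ha
            simpa using Hlo c a hc (hA a ha)
          have e6 : A.countP (fun b => decide (b < c)) = 0 := by
            rw [List.countP_eq_zero]
            intro a ha
            have := Hlo c a hc (hA a ha)
            simp only [decide_eq_true_eq]; omega
          have e7 : l.countP (fun a => !p a) = A.length + suf.countP (fun a => !p a) := by
            conv_lhs => rw [← hsplit]
            rw [List.countP_append, List.countP_cons]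
            have hA' : A.countP (fun a => !p a) = A.length := by
              rw [List.countP_eq_length]
              intro a ha; simp [hA a ha]
            rw [hA', hc]
            simp
          omega

lemma gamF_inv_hi (p : ℕ → Bool) (Hhi : ∀ a b, p a = true → p b = false → b < a) :
    ∀ (k : ℕ) (l : List ℕ), l.length ≤ k →
      (∀ y, l.getLast? = some y → p y = true) →
      inv (gamF k p l) = inv l + l.countP (fun a => !p a) := by
  intro k
  induction k with
  | zero =>
      intro l hlen _
      have : l = [] := List.length_eq_zero_iff.mp (Nat.le_zero.mp hlen)
      subst this; simp [inv, gamF]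
  | succ k ih =>
      intro l hl hlast
      cases h : l.dropWhile (fun a => !p a) with
      | nil =>
          rcases List.eq_nil_or_concat l with rfl | ⟨l', y, rfl⟩
          · simp [inv, gamF_nil]
          · have hy : p y = true := hlast y (by simp [List.concat_eq_append])
            have hall := List.dropWhile_eq_nil_iff.mp h y (by simp [List.concat_eq_append])
            rw [hy] at hall; simp at hall
      | cons c suf =>
          rw [gamF_succ_cons k h]
          have hsplit : l.takeWhile (fun a => !p a) ++ (c :: suf) = l :=
            (h ▸ List.takeWhile_append_dropWhile (p := fun a => !p a) (l := l))
          set A := l.takeWhile (fun a => !p a) with hAdef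
          set G := gamF k p suf with hGdef
          have hlen : suf.length ≤ k := by
            have := congrArg List.length hsplit
            simp at this; omega
          have hA : ∀ a ∈ A, p a = false := by
            intro a ha
            have := List.mem_takeWhile_imp ha
            simpa using this
          have hc : p c = true := by
            have := dropWhile_head_false l h
            simpa using this
          have hlast' : ∀ y, suf.getLast? = some y → p y = true := by
            intro y hy
            apply hlast
            rw [← hsplit]
            cases suf with
            | nil => simp at hy
            | cons s t =>
                rw [List.getLast?_append_of_ne_nil _ (by simp)]
                rw [List.getLast?_cons_cons]
                exact hy
          have ihsuf := ih suf hlen hlast'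
          rw [← hGdef] at ihsuf
          have hGperm : G.Perm suf := gamF_perm p k suf hlen
          have e1 : inv l = inv A + (suf.countP (fun b => decide (b < c)) + inv suf)
              + (A.countP (fun z => decide (c < z)) + cross A suf) := by
            conv_lhs => rw [← hsplit]
            rw [inv_append]
            simp only [inv, cross]
          have e2 : inv ((c :: A) ++ G)
              = (A.countP (fun b => decide (b < c)) + inv A) + inv G
                + (cross A G + G.countP (fun y => decide (y < c))) := by
            rw [inv_append, cross_cons]
            simp only [inv]
            try omega
          have e3 : cross A G = cross A suf := cross_perm_right A hGperm
          have e4 : G.countP (fun y => decide (y < c)) = suf.countP (fun y => decide (y < c)) :=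
            hGperm.countP_eq _
          have e5 : A.countP (fun z => decide (c < z)) = 0 := by
            rw [List.countP_eq_zero]
            intro a ha
            have := Hhi c a hc (hA a ha)
            simp only [decide_eq_true_eq]; omega
          have e6 : A.countP (fun b => decide (b < c)) = A.length := by
            rw [List.countP_eq_length]
            intro a ha
            simpa using Hhi c a hc (hA a ha)
          have e7 : l.countP (fun a => !p a) = A.length + suf.countP (fun a => !p a) := by
            conv_lhs => rw [← hsplit]
            rw [List.countP_append, List.countP_cons]
            have hA' : A.countP (fun a => !p a) = A.length := by
              rw [List.countP_eq_length]
              intro a ha; simp [hA a ha]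
            rw [hA', hc]
            simp
          omega

lemma gamF_head (p : ℕ → Bool) (k : ℕ) (l : List ℕ) (hk : l.length ≤ k) {c : ℕ} {suf : List ℕ}
    (h : l.dropWhile (fun a => !p a) = c :: suf) : ∃ t, gamF k p l = c :: t := by
  cases k with
  | zero =>
      have : l = [] := List.length_eq_zero_iff.mp (Nat.le_zero.mp hk)
      subst this; simp at h
  | succ k =>
      rw [gamF_succ_cons k h]
      exact ⟨l.takeWhile (fun a => !p a) ++ gamF k p suf, by simp⟩

lemma dropWhile_ne_nil_of_last (p : ℕ → Bool) (l : List ℕ) (hne : l ≠ [])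
    (hlast : ∀ y, l.getLast? = some y → p y = true) :
    l.dropWhile (fun a => !p a) ≠ [] := by
  intro h0
  have hy : p (l.getLast hne) = true := hlast _ (List.getLast?_eq_getLast (l := l) hne)
  have hall := List.dropWhile_eq_nil_iff.mp h0 _ (List.getLast_mem hne)
  rw [hy] at hall; simp at hall

def dgamF : ℕ → (ℕ → Bool) → List ℕ → List ℕ
  | 0, _, l => l
  | _+1, _, [] => []
  | k+1, p, c :: t => t.takeWhile (fun a => !p a) ++ c :: dgamF k p (t.dropWhile (fun a => !p a))

lemma dgamF_nil (k : ℕ) (p : ℕ → Bool) : dgamF k p [] = [] := by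
  cases k <;> rfl

lemma takeWhile_append_cons (q : ℕ → Bool) (A : List ℕ) (b : ℕ) (r : List ℕ)
    (hA : ∀ a ∈ A, q a = true) (hb : q b = false) :
    (A ++ b :: r).takeWhile q = A ∧ (A ++ b :: r).dropWhile q = b :: r := by
  induction A with
  | nil =>
      have hb' : ¬ q b = true := by simp [hb]
      exact ⟨by simp [List.takeWhile_cons_of_neg hb'],
        by simp [List.dropWhile_cons_of_neg hb']⟩
  | cons a A ih =>
      have ha : q a = true := hA a (by simp)
      have ih' := ih (fun a ha' => hA a (by simp [ha']))
      constructor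
      · rw [List.cons_append, List.takeWhile_cons_of_pos ha, ih'.1]
      · rw [List.cons_append, List.dropWhile_cons_of_pos ha, ih'.2]

lemma dgamF_gamF (p : ℕ → Bool) : ∀ (k k2 : ℕ) (l : List ℕ), l.length ≤ k → l.length ≤ k2 →
    (∀ y, l.getLast? = some y → p y = true) → dgamF k2 p (gamF k p l) = l := by
  intro k
  induction k with
  | zero =>
      intro k2 l hl _ _
      have : l = [] := List.length_eq_zero_iff.mp (Nat.le_zero.mp hl)
      subst this; rw [gamF_nil, dgamF_nil]
  | succ k ih =>
      intro k2 l hl hl2 hlast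
      cases h : l.dropWhile (fun a => !p a) with
      | nil =>
          rcases List.eq_nil_or_concat l with rfl | ⟨l', y, rfl⟩
          · rw [gamF_nil, dgamF_nil]
          · exfalso
            have hy : p y = true := hlast y (by simp [List.concat_eq_append])
            have hall := List.dropWhile_eq_nil_iff.mp h y (by simp [List.concat_eq_append])
            rw [hy] at hall; simp at hall
      | cons c suf =>
          rw [gamF_succ_cons k h]
          have hsplit : l.takeWhile (fun a => !p a) ++ (c :: suf) = l :=
            (h ▸ List.takeWhile_append_dropWhile (p := fun a => !p a) (l := l))
          have hlen : suf.length ≤ k := by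
            have := congrArg List.length hsplit
            simp at this; omega
          have hlenl : l.length = (l.takeWhile (fun a => !p a)).length + suf.length + 1 := by
            have := congrArg List.length hsplit
            simp at this; omega
          have hA : ∀ a ∈ l.takeWhile (fun a => !p a), (!p a) = true := by
            intro a ha; exact List.mem_takeWhile_imp (p := fun a => !p a) ha
          have hlast' : ∀ y, suf.getLast? = some y → p y = true := by
            intro y hy
            apply hlast
            rw [← hsplit]
            cases suf with
            | nil => simp at hy
            | cons s t =>
                rw [List.getLast?_append_of_ne_nil _ (by simp)]
                rw [List.getLast?_cons_cons]
                exact hy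
          cases k2 with
          | zero => omega
          | succ k2 =>
              have hk2 : suf.length ≤ k2 := by omega
              have e0 : (c :: l.takeWhile (fun a => !p a)) ++ gamF k p suf
                  = c :: (l.takeWhile (fun a => !p a) ++ gamF k p suf) := by simp
              rw [e0]
              by_cases hsuf : suf = []
              · subst hsuf
                rw [gamF_nil]
                show (l.takeWhile (fun a => !p a) ++ []).takeWhile (fun a => !p a) ++
                    c :: dgamF k2 p ((l.takeWhile (fun a => !p a) ++ []).dropWhile (fun a => !p a)) = l
                rw [List.append_nil, List.takeWhile_idem,
                  List.dropWhile_eq_nil_iff.mpr hA, dgamF_nil]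
                simpa using hsplit
              · have hdne := dropWhile_ne_nil_of_last p suf hsuf hlast'
                cases h2 : suf.dropWhile (fun a => !p a) with
                | nil => exact absurd h2 hdne
                | cons c2 suf2 =>
                    obtain ⟨t2, hG⟩ := gamF_head p k suf hlen h2
                    have hc2 : p c2 = true := by
                      have := dropWhile_head_false suf h2
                      simpa using this
                    rw [hG]
                    show (l.takeWhile (fun a => !p a) ++ c2 :: t2).takeWhile (fun a => !p a) ++
                        c :: dgamF k2 p ((l.takeWhile (fun a => !p a) ++ c2 :: t2).dropWhile
                          (fun a => !p a)) = l
                    have htk := takeWhile_append_cons (fun a => !p a)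
                      (l.takeWhile (fun a => !p a)) c2 t2 hA (by simp [hc2])
                    rw [htk.1, htk.2, ← hG, ih k2 suf hlen hk2 hlast']
                    exact hsplit

def gamx (x : ℕ) (l : List ℕ) : List ℕ :=
  match l.getLast? with
  | none => l
  | some y =>
      if y ≤ x then gamF l.length (fun a => decide (a ≤ x)) l
      else gamF l.length (fun a => decide (x < a)) l

lemma gamx_of_last {x : ℕ} {l : List ℕ} {y : ℕ} (hy : l.getLast? = some y) :
    gamx x l = if y ≤ x then gamF l.length (fun a => decide (a ≤ x)) l
      else gamF l.length (fun a => decide (x < a)) l := by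
  simp [gamx, hy]

lemma gamx_nil (x : ℕ) : gamx x [] = [] := rfl

lemma gamx_perm (x : ℕ) (l : List ℕ) : (gamx x l).Perm l := by
  cases hy : l.getLast? with
  | none => simp [gamx, hy]
  | some y =>
      rw [gamx_of_last hy]
      split <;> exact gamF_perm _ l.length l le_rfl

lemma hlast_le {x y : ℕ} {l : List ℕ} (hy : l.getLast? = some y) (hxy : y ≤ x) :
    ∀ y', l.getLast? = some y' → (fun a => decide (a ≤ x)) y' = true := by
  intro y' hy'
  rw [hy] at hy'
  cases hy'
  simpa using hxy

lemma hlast_gt {x y : ℕ} {l : List ℕ} (hy : l.getLast? = some y) (hxy : x < y) :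
    ∀ y', l.getLast? = some y' → (fun a => decide (x < a)) y' = true := by
  intro y' hy'
  rw [hy] at hy'
  cases hy'
  simpa using hxy

lemma gamx_inv_le {x : ℕ} {l : List ℕ} {y : ℕ} (hy : l.getLast? = some y) (hxy : y ≤ x) :
    inv l = inv (gamx x l) + l.countP (fun a => decide (x < a)) := by
  rw [gamx_of_last hy, if_pos hxy]
  have H := gamF_inv_lo (fun a => decide (a ≤ x))
    (by intro a b ha hb; simp at ha hb; omega) l.length l le_rfl (hlast_le hy hxy)
  have hc : l.countP (fun a => !decide (a ≤ x)) = l.countP (fun a => decide (x < a)) := by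
    apply List.countP_congr
    intro a _
    simp
  rw [hc] at H
  exact H

lemma gamx_inv_gt {x : ℕ} {l : List ℕ} {y : ℕ} (hy : l.getLast? = some y) (hxy : x < y) :
    inv (gamx x l) = inv l + l.countP (fun a => decide (a ≤ x)) := by
  rw [gamx_of_last hy, if_neg (by omega)]
  have H := gamF_inv_hi (fun a => decide (x < a))
    (by intro a b ha hb; simp at ha hb; omega) l.length l le_rfl (hlast_gt hy hxy)
  have hc : l.countP (fun a => !decide (x < a)) = l.countP (fun a => decide (a ≤ x)) := by
    apply List.countP_congr
    intro a _
    simp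
  rw [hc] at H
  exact H

lemma gamx_filter (x : ℕ) (q : ℕ → Bool)
    (hq : ∀ y z, q y = true → q z = true → (decide (y ≤ x) = decide (z ≤ x)))
    (l : List ℕ) : (gamx x l).filter q = l.filter q := by
  cases hy : l.getLast? with
  | none => simp [gamx, hy]
  | some y =>
      rw [gamx_of_last hy]
      split
      · exact gamF_filter _ q (by intro y' z hy' hz; exact hq y' z hy' hz) l.length l le_rfl
      · refine gamF_filter _ q ?_ l.length l le_rfl
        intro y' z hy' hz
        have := hq y' z hy' hz
        simp only [decide_eq_decide] at this ⊢
        omega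

lemma gamx_length (x : ℕ) (l : List ℕ) : (gamx x l).length = l.length :=
  (gamx_perm x l).length_eq

lemma gamx_inj (x : ℕ) {l l' : List ℕ} (h : gamx x l = gamx x l') : l = l' := by
  cases hy : l.getLast? with
  | none =>
      have hl : l = [] := List.getLast?_eq_none_iff.mp hy
      subst hl
      cases hy' : l'.getLast? with
      | none => exact (List.getLast?_eq_none_iff.mp hy').symm
      | some y' =>
          exfalso
          rw [gamx_nil] at h
          have := gamx_length x l'
          rw [← h] at this
          simp at this
          have hl' : l' = [] := List.length_eq_zero_iff.mp this.symm
          subst hl'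
          simp at hy'
  | some y =>
      cases hy' : l'.getLast? with
      | none =>
          exfalso
          have hl' : l' = [] := List.getLast?_eq_none_iff.mp hy'
          subst hl'
          rw [gamx_nil] at h
          have := gamx_length x l
          rw [h] at this
          simp at this
          have hl : l = [] := List.length_eq_zero_iff.mp this.symm
          subst hl
          simp at hy
      | some y' =>
          have hne : l ≠ [] := by intro h0; subst h0; simp at hy
          have hne' : l' ≠ [] := by intro h0; subst h0; simp at hy'
          have hlen : l.length = l'.length := by
            have h1 := gamx_length x l
            have h2 := gamx_length x l'
            rw [h] at h1; omega
          -- heads of the two gamx images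
          by_cases hyx : y ≤ x
          · have hd := dropWhile_ne_nil_of_last (fun a => decide (a ≤ x)) l hne (hlast_le hy hyx)
            cases hdw : l.dropWhile (fun a => !(fun a => decide (a ≤ x)) a) with
            | nil => exact absurd hdw hd
            | cons c t =>
                obtain ⟨t1, hG1⟩ := gamF_head _ l.length l le_rfl hdw
                have hc : c ≤ x := by
                  have := dropWhile_head_false l hdw
                  simpa using this
                by_cases hyx' : y' ≤ x
                · -- same branch
                  rw [gamx_of_last hy, if_pos hyx] at h
                  rw [gamx_of_last hy', if_pos hyx'] at h
                  have e1 := dgamF_gamF (fun a => decide (a ≤ x)) l.length l.length l le_rfl le_rfl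
                    (hlast_le hy hyx)
                  have e2 := dgamF_gamF (fun a => decide (a ≤ x)) l'.length l'.length l' le_rfl le_rfl
                    (hlast_le hy' hyx')
                  refine e1.symm.trans (Eq.trans ?_ e2)
                  rw [h, hlen]
                · -- mixed: contradiction
                  exfalso
                  have hd' := dropWhile_ne_nil_of_last (fun a => decide (x < a)) l' hne'
                    (hlast_gt hy' (by omega))
                  cases hdw' : l'.dropWhile (fun a => !(fun a => decide (x < a)) a) with
                  | nil => exact absurd hdw' hd'
                  | cons c' t' =>
                      obtain ⟨t1', hG1'⟩ := gamF_head _ l'.length l' le_rfl hdw'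
                      have hc' : x < c' := by
                        have := dropWhile_head_false l' hdw'
                        simpa using this
                      rw [gamx_of_last hy, if_pos hyx, hG1] at h
                      rw [gamx_of_last hy', if_neg (by omega), hG1'] at h
                      cases h
                      omega
          · have hd := dropWhile_ne_nil_of_last (fun a => decide (x < a)) l hne
              (hlast_gt hy (by omega))
            cases hdw : l.dropWhile (fun a => !(fun a => decide (x < a)) a) with
            | nil => exact absurd hdw hd
            | cons c t =>
                obtain ⟨t1, hG1⟩ := gamF_head _ l.length l le_rfl hdw
                have hc : x < c := by
                  have := dropWhile_head_false l hdw
                  simpa using this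
                by_cases hyx' : y' ≤ x
                · exfalso
                  have hd' := dropWhile_ne_nil_of_last (fun a => decide (a ≤ x)) l' hne'
                    (hlast_le hy' hyx')
                  cases hdw' : l'.dropWhile (fun a => !(fun a => decide (a ≤ x)) a) with
                  | nil => exact absurd hdw' hd'
                  | cons c' t' =>
                      obtain ⟨t1', hG1'⟩ := gamF_head _ l'.length l' le_rfl hdw'
                      have hc' : c' ≤ x := by
                        have := dropWhile_head_false l' hdw'
                        simpa using this
                      rw [gamx_of_last hy, if_neg (by omega), hG1] at h
                      rw [gamx_of_last hy', if_pos hyx', hG1'] at h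
                      cases h
                      omega
                · rw [gamx_of_last hy, if_neg (by omega)] at h
                  rw [gamx_of_last hy', if_neg (by omega)] at h
                  have e1 := dgamF_gamF (fun a => decide (x < a)) l.length l.length l le_rfl le_rfl
                    (hlast_gt hy (by omega))
                  have e2 := dgamF_gamF (fun a => decide (x < a)) l'.length l'.length l' le_rfl le_rfl
                    (hlast_gt hy' (by omega))
                  refine e1.symm.trans (Eq.trans ?_ e2)
                  rw [h, hlen]

def phiA : List ℕ → List ℕ
  | [] => []
  | x :: rs => gamx x (phiA rs) ++ [x]

lemma phiA_perm : ∀ xs : List ℕ, (phiA xs).Perm xs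
  | [] => List.Perm.refl []
  | x :: rs => by
      show ((gamx x (phiA rs)) ++ [x]).Perm (x :: rs)
      exact (List.perm_append_singleton x _).trans
        (((gamx_perm x (phiA rs)).trans (phiA_perm rs)).cons x)

lemma phiA_length (xs : List ℕ) : (phiA xs).length = xs.length :=
  (phiA_perm xs).length_eq

lemma phiA_getLast? : ∀ xs : List ℕ, (phiA xs).getLast? = xs.head?
  | [] => rfl
  | x :: rs => by
      show ((gamx x (phiA rs)) ++ [x]).getLast? = _
      rw [List.getLast?_concat]
      rfl

lemma phiA_inv : ∀ xs : List ℕ, inv (phiA xs) = majA xs := by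
  intro xs
  induction xs with
  | nil => rfl
  | cons x rs ih =>
      show inv ((gamx x (phiA rs)) ++ [x]) = majA (x :: rs)
      rw [inv_snoc]
      have hcnt : (gamx x (phiA rs)).countP (fun a => decide (x < a))
          = (phiA rs).countP (fun a => decide (x < a)) :=
        (gamx_perm x (phiA rs)).countP_eq _
      cases rs with
      | nil => simp [phiA, gamx_nil, inv, majA]
      | cons y rs' =>
          have hW : (phiA (y :: rs')).getLast? = some y := by
            rw [phiA_getLast?]; rfl
          by_cases hxy : y ≤ x
          · have hle := gamx_inv_le (x := x) hW hxy
            have hm : majA (x :: y :: rs') = majA (y :: rs') := by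
              simp only [majA]
              rw [if_neg (by omega : ¬ x < y), Nat.zero_add]
            rw [hm, ← ih]
            omega
          · have hgt := gamx_inv_gt (x := x) hW (by omega)
            have hsp := countP_split (fun a => decide (a ≤ x)) (phiA (y :: rs'))
            have hcc : (phiA (y :: rs')).countP (fun a => !decide (a ≤ x))
                = (phiA (y :: rs')).countP (fun a => decide (x < a)) := by
              apply List.countP_congr; intro a _; simp
            have hm : majA (x :: y :: rs') = rs'.length + 1 + majA (y :: rs') := by
              simp only [majA]
              rw [if_pos (by omega : x < y)]
            have hlen : (phiA (y :: rs')).length = rs'.length + 1 := by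
              rw [phiA_length]; rfl
            rw [hm, ← ih]
            omega

lemma phiA_inj : ∀ xs ys : List ℕ, phiA xs = phiA ys → xs = ys := by
  intro xs
  induction xs with
  | nil =>
      intro ys h
      cases ys with
      | nil => rfl
      | cons y rs' =>
          exfalso
          have := congrArg List.length h
          rw [phiA_length, phiA_length] at this
          simp at this
  | cons x rs ih =>
      intro ys h
      cases ys with
      | nil =>
          exfalso
          have := congrArg List.length h
          rw [phiA_length, phiA_length] at this
          simp at this
      | cons y rs' =>
          have hlen : rs.length = rs'.length := by
            have := congrArg List.length h
            rw [phiA_length, phiA_length] at this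
            simpa using this
          have h' : (gamx x (phiA rs)) ++ [x] = (gamx y (phiA rs')) ++ [y] := h
          have hpre : (gamx x (phiA rs)).length = (gamx y (phiA rs')).length := by
            rw [gamx_length, gamx_length, phiA_length, phiA_length, hlen]
          obtain ⟨h1, h2⟩ := List.append_inj h' hpre
          have hxy : x = y := by simpa using h2
          subst hxy
          rw [ih rs' (gamx_inj x h1)]

def qpair (a : ℕ) : ℕ → Bool := fun z => decide (z = a) || decide (z = a + 1)

lemma phiA_filter (a : ℕ) : ∀ xs : List ℕ, xs.Nodup →
    (phiA xs).filter (qpair a) = xs.reverse.filter (qpair a) := by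
  intro xs
  induction xs with
  | nil => intro _; rfl
  | cons x rs ih =>
      intro hnd
      obtain ⟨hx, hnd'⟩ := List.nodup_cons.mp hnd
      show ((gamx x (phiA rs)) ++ [x]).filter (qpair a) = ((x :: rs).reverse).filter (qpair a)
      rw [List.reverse_cons, List.filter_append, List.filter_append, ← ih hnd']
      congr 1
      by_cases hxa : x = a
      · subst hxa
        have hnW : (phiA rs).Perm rs := phiA_perm rs
        have hndW : (phiA rs).Nodup := (hnW.nodup_iff).mpr hnd'
        have hcnt : (phiA rs).countP (qpair x) ≤ 1 := by
          rw [hnW.countP_eq]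
          have e1 : rs.countP (qpair x) = rs.countP (fun z => z == x + 1) := by
            apply List.countP_congr
            intro z hz
            have hzx : z ≠ x := fun h0 => hx (h0 ▸ hz)
            simp [qpair, hzx]
          rw [e1, ← List.count_eq_countP]
          exact List.nodup_iff_count_le_one.mp hnd' (x + 1)
        have hperm2 : ((gamx x (phiA rs)).filter (qpair x)).Perm ((phiA rs).filter (qpair x)) :=
          (gamx_perm x (phiA rs)).filter _
        have hlen1 : ((phiA rs).filter (qpair x)).length ≤ 1 := by
          rw [← List.countP_eq_length_filter]; exact hcnt
        cases hF : (phiA rs).filter (qpair x) with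
        | nil =>
            rw [hF] at hperm2
            exact hperm2.eq_nil
        | cons z zs =>
            rw [hF] at hperm2 hlen1
            have hzs : zs = [] := by
              simp only [List.length_cons] at hlen1
              have : zs.length = 0 := by omega
              exact List.length_eq_zero_iff.mp this
            subst hzs
            exact List.perm_singleton.mp hperm2
      · apply gamx_filter
        intro u v hu hv
        simp only [qpair, Bool.or_eq_true, decide_eq_true_eq] at hu hv
        simp only [decide_eq_decide]
        omega

def phi (l : List ℕ) : List ℕ := phiA l.reverse

lemma phi_perm (l : List ℕ) : (phi l).Perm l :=
  (phiA_perm _).trans (List.reverse_perm l)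

lemma phi_inv (l : List ℕ) : inv (phi l) = majA l.reverse := phiA_inv _

lemma phi_inj {l l' : List ℕ} (h : phi l = phi l') : l = l' :=
  List.reverse_injective (phiA_inj _ _ h)

lemma phi_filter (a : ℕ) (l : List ℕ) (h : l.Nodup) :
    (phi l).filter (qpair a) = l.filter (qpair a) := by
  have := phiA_filter a l.reverse (by simpa using h)
  rw [List.reverse_reverse] at this
  exact this

lemma filter_head_iff (a : ℕ) : ∀ l : List ℕ, a ∈ l → (a+1) ∈ l →
    (((l.filter (qpair a)).head? = some (a+1)) ↔ l.idxOf (a+1) < l.idxOf a) := by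
  intro l
  induction l with
  | nil => simp
  | cons c t ih =>
      intro ha hb
      by_cases hca : c = a
      · subst hca
        rw [List.filter_cons_of_pos (by simp [qpair])]
        apply iff_of_false
        · intro h0
          rw [List.head?_cons] at h0
          have := Option.some.inj h0
          omega
        · rw [List.idxOf_cons_self]
          omega
      · by_cases hcb : c = a + 1
        · subst hcb
          rw [List.filter_cons_of_pos (by simp [qpair])]
          apply iff_of_true
          · simp
          · rw [List.idxOf_cons_self, List.idxOf_cons_ne t (by omega : a + 1 ≠ a)]
            omega
        · have hqc : ¬ (qpair a c = true) := by simp [qpair, hca, hcb]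
          rw [List.filter_cons_of_neg hqc]
          have ha' : a ∈ t := by
            rcases List.mem_cons.mp ha with h0 | h0
            · exact absurd h0.symm hca
            · exact h0
          have hb' : a + 1 ∈ t := by
            rcases List.mem_cons.mp hb with h0 | h0
            · exact absurd h0.symm hcb
            · exact h0
          rw [List.idxOf_cons_ne t hca, List.idxOf_cons_ne t hcb]
          rw [Nat.succ_lt_succ_iff]
          exact ih ha' hb' 

open Equiv

def listOf (n : ℕ) (w : Equiv.Perm (Fin n × Bool)) : List ℕ :=
  (List.range n).map (fun m => rOrd n (oneLine w m))

lemma length_listOf (n : ℕ) (w : Equiv.Perm (Fin n × Bool)) : (listOf n w).length = n := by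
  simp [listOf]

lemma getD_listOf {n : ℕ} (w : Equiv.Perm (Fin n × Bool)) {m : ℕ} (hm : m < n) :
    (listOf n w).getD m 0 = rOrd n (oneLine w m) := by
  rw [listOf, List.getD_eq_getElem?_getD, List.getElem?_map, List.getElem?_range hm]
  rfl

lemma oneLine_lt {n : ℕ} (w : Equiv.Perm (Fin n × Bool)) {m : ℕ} (hm : m < n) :
    oneLine w m = (((w (⟨m, hm⟩, false)).1 : ℕ), (w (⟨m, hm⟩, false)).2) := by
  simp [oneLine, hm]

lemma oneLine_fst_lt {n : ℕ} (w : Equiv.Perm (Fin n × Bool)) {m : ℕ} (hm : m < n) :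
    (oneLine w m).1 < n := by
  rw [oneLine_lt w hm]
  exact (w (⟨m, hm⟩, false)).1.isLt

lemma rOrd_lt {n : ℕ} (w : Equiv.Perm (Fin n × Bool)) {m : ℕ} (hm : m < n) :
    rOrd n (oneLine w m) < 2 * n := by
  have h1 := oneLine_fst_lt w hm
  unfold rOrd
  split <;> omega

lemma rOrd_inj {n : ℕ} {v v' : ℕ × Bool} (h1 : v.1 < n) (h2 : v'.1 < n)
    (h : rOrd n v = rOrd n v') : v = v' := by
  obtain ⟨a, b⟩ := v
  obtain ⟨a', b'⟩ := v'
  simp only at h1 h2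
  cases b <;> cases b' <;> simp [rOrd] at h ⊢ <;> omega

lemma rOrd_true (n a : ℕ) : rOrd n (a, true) = a := by simp [rOrd]

lemma rOrd_false (n a : ℕ) : rOrd n (a, false) = n + a := by simp [rOrd]

lemma nodup_listOf (n : ℕ) (w : Equiv.Perm (Fin n × Bool)) : (listOf n w).Nodup := by
  apply List.Nodup.map_on _ (List.nodup_range (n := n))
  intro m1 h1 m2 h2 heq
  rw [List.mem_range] at h1 h2
  have ho := rOrd_inj (oneLine_fst_lt w h1) (oneLine_fst_lt w h2) heq
  rw [oneLine_lt w h1, oneLine_lt w h2] at ho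
  injection ho with hofst hosnd
  have : w (⟨m1, h1⟩, false) = w (⟨m2, h2⟩, false) :=
    Prod.ext_iff.mpr ⟨Fin.ext hofst, hosnd⟩
  have := w.injective this
  exact congrArg (fun q : Fin n × Bool => (q.1 : ℕ)) this

lemma mem_listOf {n : ℕ} {w : Equiv.Perm (Fin n × Bool)} {r : ℕ} :
    r ∈ listOf n w ↔ ∃ m, m < n ∧ rOrd n (oneLine w m) = r := by
  simp [listOf, List.mem_map, List.mem_range]

lemma bdd_listOf {n : ℕ} {w : Equiv.Perm (Fin n × Bool)} {r : ℕ} (hr : r ∈ listOf n w) :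
    r < 2 * n := by
  obtain ⟨m, hm, rfl⟩ := mem_listOf.mp hr
  exact rOrd_lt w hm

lemma mem_listOf_bar {n : ℕ} {w : Equiv.Perm (Fin n × Bool)} {i : ℕ} (hi : i < n) :
    i ∈ listOf n w ↔ ∃ m : Fin n, w (m, false) = (⟨i, hi⟩, true) := by
  constructor
  · rintro hr
    obtain ⟨m, hm, hro⟩ := mem_listOf.mp hr
    rw [oneLine_lt w hm] at hro
    have hb : (w (⟨m, hm⟩, false)).2 = true := by
      by_contra hb
      simp only [Bool.not_eq_true] at hb
      rw [hb, rOrd_false] at hro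
      have := (w (⟨m, hm⟩, false)).1.isLt
      omega
    rw [hb, rOrd_true] at hro
    exact ⟨⟨m, hm⟩, Prod.ext_iff.mpr ⟨Fin.ext (by simpa using hro), hb⟩⟩
  · rintro ⟨m, hm⟩
    apply mem_listOf.mpr
    refine ⟨m, m.isLt, ?_⟩
    rw [oneLine_lt w m.isLt]
    simp only [Fin.eta, hm]
    exact rOrd_true n i

lemma mem_listOf_unbar {n : ℕ} {w : Equiv.Perm (Fin n × Bool)} {i : ℕ} (hi : i < n) :
    (n + i) ∈ listOf n w ↔ ∃ m : Fin n, w (m, false) = (⟨i, hi⟩, false) := by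
  constructor
  · rintro hr
    obtain ⟨m, hm, hro⟩ := mem_listOf.mp hr
    rw [oneLine_lt w hm] at hro
    have hb : (w (⟨m, hm⟩, false)).2 = false := by
      by_contra hb
      simp only [Bool.not_eq_false] at hb
      rw [hb, rOrd_true] at hro
      have := (w (⟨m, hm⟩, false)).1.isLt
      omega
    rw [hb, rOrd_false] at hro
    have hico : ((w (⟨m, hm⟩, false)).1 : ℕ) = i := by omega
    exact ⟨⟨m, hm⟩, Prod.ext_iff.mpr ⟨Fin.ext (by simpa using hico), hb⟩⟩
  · rintro ⟨m, hm⟩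
    apply mem_listOf.mpr
    refine ⟨m, m.isLt, ?_⟩
    rw [oneLine_lt w m.isLt]
    simp only [Fin.eta, hm]
    exact rOrd_false n i

lemma listOf_excl {n : ℕ} {w : Equiv.Perm (Fin n × Bool)} (hw : IsSignedPerm w)
    {i : ℕ} (hi : i < n) (h1 : i ∈ listOf n w) : ¬ (n + i) ∈ listOf n w := by
  intro h2
  obtain ⟨m, hm⟩ := (mem_listOf_bar hi).mp h1
  obtain ⟨m', hm'⟩ := (mem_listOf_unbar hi).mp h2
  have hswap := hw (m, false)
  rw [hm] at hswap
  simp only [Bool.not_false, Bool.not_true] at hswap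
  rw [hm'.symm] at hswap
  have := w.injective hswap
  simp at this

lemma symm_snd {n : ℕ} {w : Equiv.Perm (Fin n × Bool)} (hw : IsSignedPerm w)
    {p : ℕ} (hp : p < n) :
    ((oneLine w.symm p).2 = true ↔ p ∈ listOf n w) := by
  have holp := oneLine_lt w.symm hp
  set z := w.symm (⟨p, hp⟩, false) with hz
  have hwz : w z = (⟨p, hp⟩, false) := Equiv.apply_symm_apply w (⟨p, hp⟩, false)
  cases hb : z.2 with
  | true =>
      have hz2 : ((z.1, true) : Fin n × Bool) = z := by rw [← hb]
      have h1 : w (z.1, false) = (⟨p, hp⟩, true) := by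
        have hc := hw (z.1, true)
        rw [hz2, hwz] at hc
        simpa [hb] using hc
      have hmem : p ∈ listOf n w := (mem_listOf_bar hp).mpr ⟨z.1, h1⟩
      rw [holp, hb]
      simpa using hmem
  | false =>
      have hz2 : ((z.1, false) : Fin n × Bool) = z := by rw [← hb]
      have h1 : w (z.1, false) = (⟨p, hp⟩, false) := by rw [hz2, hwz]
      have hnmem : ¬ p ∈ listOf n w := by
        intro hmem
        obtain ⟨m, hm⟩ := (mem_listOf_bar hp).mp hmem
        have hswap := hw (m, false)
        rw [hm] at hswap
        simp only [Bool.not_false, Bool.not_true] at hswap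
        rw [← h1] at hswap
        have := w.injective hswap
        simp at this
      rw [holp, hb]
      simpa using hnmem

lemma symm_fst {n : ℕ} {w : Equiv.Perm (Fin n × Bool)} (hw : IsSignedPerm w)
    {p : ℕ} (hp : p < n) :
    (oneLine w.symm p).1 =
      (listOf n w).idxOf (if p ∈ listOf n w then p else n + p) ∧
    (if p ∈ listOf n w then p else n + p) ∈ listOf n w := by
  have holp := oneLine_lt w.symm hp
  set z := w.symm (⟨p, hp⟩, false) with hz
  have hwz : w z = (⟨p, hp⟩, false) := Equiv.apply_symm_apply w (⟨p, hp⟩, false)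
  have hlen : (listOf n w).length = n := length_listOf n w
  have hget : ∀ (m : Fin n) (e : ℕ), rOrd n (oneLine w m) = e →
      (listOf n w).idxOf e = (m : ℕ) ∧ e ∈ listOf n w := by
    intro m e he
    have hmlt : (m : ℕ) < (listOf n w).length := by rw [hlen]; exact m.isLt
    have hgetm : (listOf n w).get ⟨m, hmlt⟩ = e := by
      rw [List.get_eq_getElem, ← List.getD_eq_getElem _ 0 hmlt, getD_listOf w m.isLt]
      exact he
    constructor
    · have := List.get_idxOf (nodup_listOf n w) ⟨m, hmlt⟩
      rw [hgetm] at this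
      exact this
    · rw [← hgetm]
      exact List.get_mem _ _
  cases hb : z.2 with
  | true =>
      have hz2 : ((z.1, true) : Fin n × Bool) = z := by rw [← hb]
      have h1 : w (z.1, false) = (⟨p, hp⟩, true) := by
        have hc := hw (z.1, true)
        rw [hz2, hwz] at hc
        simpa [hb] using hc
      have hmem : p ∈ listOf n w := (mem_listOf_bar hp).mpr ⟨z.1, h1⟩
      have hro : rOrd n (oneLine w z.1) = p := by
        rw [oneLine_lt w z.1.isLt]
        simp only [Fin.eta, h1]
        exact rOrd_true n p
      obtain ⟨hidx, hmem2⟩ := hget z.1 p hro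
      rw [holp, if_pos hmem]
      exact ⟨hidx.symm, hmem⟩
  | false =>
      have hz2 : ((z.1, false) : Fin n × Bool) = z := by rw [← hb]
      have h1 : w (z.1, false) = (⟨p, hp⟩, false) := by rw [hz2, hwz]
      have hmem : (n + p) ∈ listOf n w := (mem_listOf_unbar hp).mpr ⟨z.1, h1⟩
      have hnmem : ¬ p ∈ listOf n w := by
        intro hmem'
        obtain ⟨m, hm⟩ := (mem_listOf_bar hp).mp hmem'
        have hswap := hw (m, false)
        rw [hm] at hswap
        simp only [Bool.not_false, Bool.not_true] at hswap
        rw [← h1] at hswap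
        have := w.injective hswap
        simp at this
      have hro : rOrd n (oneLine w z.1) = n + p := by
        rw [oneLine_lt w z.1.isLt]
        simp only [Fin.eta, h1]
        exact rOrd_false n p
      obtain ⟨hidx, hmem2⟩ := hget z.1 (n + p) hro
      rw [holp, if_neg hnmem]
      exact ⟨hidx.symm, hmem⟩

lemma rOrd_of_true {n : ℕ} {o : ℕ × Bool} (h : o.2 = true) : rOrd n o = o.1 := by
  unfold rOrd; rw [h]; simp

lemma rOrd_of_false {n : ℕ} {o : ℕ × Bool} (h : o.2 = false) : rOrd n o = n + o.1 := by
  unfold rOrd; rw [h]; simp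

lemma notmem_of_false {n : ℕ} {w : Equiv.Perm (Fin n × Bool)} (hw : IsSignedPerm w)
    {p : ℕ} (hp : p < n) (hb : (oneLine w.symm p).2 = false) : ¬ p ∈ listOf n w := by
  intro hmem
  have := (symm_snd hw hp).mpr hmem
  rw [hb] at this
  exact Bool.false_ne_true this

lemma cond_iff_tt {n : ℕ} {w : Equiv.Perm (Fin n × Bool)} (hw : IsSignedPerm w)
    {p : ℕ} (hpl : p + 1 < n)
    (hb : (oneLine w.symm p).2 = true) (hb1 : (oneLine w.symm (p+1)).2 = true) :
    ((rOrd n (oneLine w.symm (p+1)) < rOrd n (oneLine w.symm p) ∨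
      ((oneLine w.symm p).2 = true ∧ (oneLine w.symm (p+1)).2 = false))
     ↔ (((listOf n w).filter (qpair p)).head? = some (p+1))) := by
  have hp : p < n := by omega
  have hpmem : p ∈ listOf n w := (symm_snd hw hp).mp hb
  have hp1mem : (p+1) ∈ listOf n w := (symm_snd hw hpl).mp hb1
  have hB := (symm_fst hw hp).1
  have hB1 := (symm_fst hw hpl).1
  rw [rOrd_of_true hb, rOrd_of_true hb1, hB, hB1, if_pos hpmem, if_pos hp1mem, hb1]
  rw [filter_head_iff p (listOf n w) hpmem hp1mem]
  simp

lemma cond_iff_ff {n : ℕ} {w : Equiv.Perm (Fin n × Bool)} (hw : IsSignedPerm w)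
    {p : ℕ} (hpl : p + 1 < n)
    (hb : (oneLine w.symm p).2 = false) (hb1 : (oneLine w.symm (p+1)).2 = false) :
    ((rOrd n (oneLine w.symm (p+1)) < rOrd n (oneLine w.symm p) ∨
      ((oneLine w.symm p).2 = true ∧ (oneLine w.symm (p+1)).2 = false))
     ↔ (((listOf n w).filter (qpair (n + p))).head? = some (n + p + 1))) := by
  have hp : p < n := by omega
  have hpmem : ¬ p ∈ listOf n w := notmem_of_false hw hp hb
  have hp1mem : ¬ (p+1) ∈ listOf n w := notmem_of_false hw hpl hb1
  have hB := symm_fst hw hp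
  have hB1 := symm_fst hw hpl
  have hmem2 : (n + p) ∈ listOf n w := by
    have := hB.2; rwa [if_neg hpmem] at this
  have hmem21 : (n + p + 1) ∈ listOf n w := by
    have := hB1.2; rwa [if_neg hp1mem, ← Nat.add_assoc] at this
  rw [rOrd_of_false hb, rOrd_of_false hb1, hB.1, hB1.1, if_neg hpmem, if_neg hp1mem, hb]
  rw [filter_head_iff (n + p) (listOf n w) hmem2 hmem21]
  have he : n + (p + 1) = n + p + 1 := by omega
  rw [he]
  simp [Nat.add_lt_add_iff_left]

lemma sDes_eq {n : ℕ} {w w' : Equiv.Perm (Fin n × Bool)}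
    (hw : IsSignedPerm w) (hw' : IsSignedPerm w')
    (hmem : ∀ r, r ∈ listOf n w' ↔ r ∈ listOf n w)
    (hfil : ∀ a, (listOf n w').filter (qpair a) = (listOf n w).filter (qpair a)) :
    sDesPerm w'.symm = sDesPerm w.symm := by
  funext p
  unfold sDesPerm
  by_cases hpn : p + 1 = n
  · rw [if_pos hpn, if_pos hpn]
    have hp : p < n := by omega
    have hc : (oneLine w'.symm p).2 = (oneLine w.symm p).2 := by
      rw [Bool.eq_iff_iff, symm_snd hw' hp, symm_snd hw hp]
      exact hmem p
    rw [hc]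
  · rw [if_neg hpn, if_neg hpn]
    by_cases hpl : p + 1 < n
    · have hp : p < n := by omega
      have hc : (oneLine w'.symm p).2 = (oneLine w.symm p).2 := by
        rw [Bool.eq_iff_iff, symm_snd hw' hp, symm_snd hw hp]
        exact hmem p
      have hc1 : (oneLine w'.symm (p+1)).2 = (oneLine w.symm (p+1)).2 := by
        rw [Bool.eq_iff_iff, symm_snd hw' hpl, symm_snd hw hpl]
        exact hmem (p+1)
      have hiff : (rOrd n (oneLine w'.symm (p+1)) < rOrd n (oneLine w'.symm p) ∨
            ((oneLine w'.symm p).2 = true ∧ (oneLine w'.symm (p+1)).2 = false))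
          ↔ (rOrd n (oneLine w.symm (p+1)) < rOrd n (oneLine w.symm p) ∨
            ((oneLine w.symm p).2 = true ∧ (oneLine w.symm (p+1)).2 = false)) := by
        by_cases hb : (oneLine w.symm p).2 = true
        · by_cases hb1 : (oneLine w.symm (p+1)).2 = true
          · have hbw : (oneLine w'.symm p).2 = true := hc.trans hb
            have hbw1 : (oneLine w'.symm (p+1)).2 = true := hc1.trans hb1
            rw [cond_iff_tt hw' hpl hbw hbw1, cond_iff_tt hw hpl hb hb1, hfil p]
          · have hb1' : (oneLine w.symm (p+1)).2 = false := by
              simpa using hb1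
            apply iff_of_true
            · exact Or.inr ⟨hc.trans hb, hc1.trans hb1'⟩
            · exact Or.inr ⟨hb, hb1'⟩
        · have hb' : (oneLine w.symm p).2 = false := by simpa using hb
          by_cases hb1 : (oneLine w.symm (p+1)).2 = true
          · apply iff_of_true
            · refine Or.inl ?_
              rw [rOrd_of_true (hc1.trans hb1), rOrd_of_false (hc.trans hb')]
              have := oneLine_fst_lt w'.symm hpl
              omega
            · refine Or.inl ?_
              rw [rOrd_of_true hb1, rOrd_of_false hb']
              have := oneLine_fst_lt w.symm hpl
              omega
          · have hb1' : (oneLine w.symm (p+1)).2 = false := by simpa using hb1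
            have hbw : (oneLine w'.symm p).2 = false := hc.trans hb'
            have hbw1 : (oneLine w'.symm (p+1)).2 = false := hc1.trans hb1'
            rw [cond_iff_ff hw' hpl hbw hbw1, cond_iff_ff hw hpl hb' hb1', hfil (n + p)]
      have hpay : (oneLine w'.symm p).2 = (oneLine w.symm p).2 := hc
      exact if_congr (and_congr_right fun _ => hiff) (by rw [hpay]) rfl
    · rw [if_neg (by intro h0; exact hpl h0.1), if_neg (by intro h0; exact hpl h0.1)]

def decoded {n : ℕ} (hn : 0 < n) (l : List ℕ) : Fin n × Bool → Fin n × Bool :=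
  fun z => (⟨l.getD (z.1 : ℕ) 0 % n, Nat.mod_lt _ hn⟩,
    xor z.2 (decide (l.getD (z.1 : ℕ) 0 < n)))

lemma mod2n (n r : ℕ) (h : r < 2 * n) :
    (r < n ∧ r % n = r) ∨ (n ≤ r ∧ r % n = r - n) := by
  by_cases h1 : r < n
  · exact Or.inl ⟨h1, Nat.mod_eq_of_lt h1⟩
  · refine Or.inr ⟨by omega, ?_⟩
    rw [Nat.mod_eq_sub_mod (by omega)]
    exact Nat.mod_eq_of_lt (by omega)

lemma decoded_inj {n : ℕ} (hn : 0 < n) (l : List ℕ) (hlen : l.length = n) (hnd : l.Nodup)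
    (hbd : ∀ r ∈ l, r < 2 * n) (hex : ∀ i, i < n → i ∈ l → ¬ (n + i) ∈ l) :
    Function.Injective (decoded hn l) := by
  rintro ⟨m, b⟩ ⟨m', b'⟩ h
  simp only [decoded] at h
  injection h with h1 h2
  injection h1 with h1
  have hmlt : (m : ℕ) < l.length := by rw [hlen]; exact m.isLt
  have hmlt' : (m' : ℕ) < l.length := by rw [hlen]; exact m'.isLt
  have hrm : l.getD (m : ℕ) 0 ∈ l := by
    rw [List.getD_eq_getElem _ 0 hmlt]; exact List.getElem_mem hmlt
  have hrm' : l.getD (m' : ℕ) 0 ∈ l := by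
    rw [List.getD_eq_getElem _ 0 hmlt']; exact List.getElem_mem hmlt'
  have hbm := hbd _ hrm
  have hbm' := hbd _ hrm'
  have hreq : l.getD (m : ℕ) 0 = l.getD (m' : ℕ) 0 := by
    rcases mod2n n _ hbm with ⟨c1, e1⟩ | ⟨c1, e1⟩ <;>
      rcases mod2n n _ hbm' with ⟨c2, e2⟩ | ⟨c2, e2⟩
    · omega
    · exfalso
      have hv : (l.getD (m' : ℕ) 0) = n + (l.getD (m : ℕ) 0) := by omega
      exact hex _ c1 hrm (hv ▸ hrm')
    · exfalso
      have hv : (l.getD (m : ℕ) 0) = n + (l.getD (m' : ℕ) 0) := by omega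
      exact hex _ c2 hrm' (hv ▸ hrm)
    · omega
  have hmeq : m = m' := by
    apply Fin.ext
    rw [List.getD_eq_getElem _ 0 hmlt, List.getD_eq_getElem _ 0 hmlt'] at hreq
    exact (hnd.getElem_inj_iff).mp hreq
  subst hmeq
  have hbeq : b = b' := by
    rcases Bool.eq_false_or_eq_true (decide (l.getD (m : ℕ) 0 < n)) with hs | hs <;>
      rw [hs] at h2 <;> cases b <;> cases b' <;> simp_all
  rw [hbeq]

open Classical in
noncomputable def PhiP {n : ℕ} (hn : 0 < n) (w : Equiv.Perm (Fin n × Bool)) :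
    Equiv.Perm (Fin n × Bool) :=
  if h : IsSignedPerm w then
    Equiv.ofBijective (decoded hn (phi (listOf n w)))
      (Finite.injective_iff_bijective.mp
        (decoded_inj hn _ ((phi_perm _).length_eq.trans (length_listOf n w))
          (((phi_perm _).nodup_iff).mpr (nodup_listOf n w))
          (fun r hr => bdd_listOf ((phi_perm _).mem_iff.mp hr))
          (fun i hi h1 h2 => listOf_excl h hi ((phi_perm _).mem_iff.mp h1)
            ((phi_perm _).mem_iff.mp h2))))
  else w

lemma PhiP_apply {n : ℕ} (hn : 0 < n) {w : Equiv.Perm (Fin n × Bool)} (hw : IsSignedPerm w)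
    (z : Fin n × Bool) : PhiP hn w z = decoded hn (phi (listOf n w)) z := by
  unfold PhiP
  rw [dif_pos hw]
  rfl

lemma oneLine_PhiP {n : ℕ} (hn : 0 < n) {w : Equiv.Perm (Fin n × Bool)} (hw : IsSignedPerm w)
    {m : ℕ} (hm : m < n) :
    oneLine (PhiP hn w) m = ((phi (listOf n w)).getD m 0 % n,
      decide ((phi (listOf n w)).getD m 0 < n)) := by
  rw [oneLine_lt _ hm, PhiP_apply hn hw]
  unfold decoded
  simp

lemma rOrd_oneLine_PhiP {n : ℕ} (hn : 0 < n) {w : Equiv.Perm (Fin n × Bool)}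
    (hw : IsSignedPerm w) {m : ℕ} (hm : m < n) :
    rOrd n (oneLine (PhiP hn w) m) = (phi (listOf n w)).getD m 0 := by
  rw [oneLine_PhiP hn hw hm]
  have hmlt : m < (phi (listOf n w)).length := by
    rw [(phi_perm _).length_eq, length_listOf]; exact hm
  have hmem : (phi (listOf n w)).getD m 0 ∈ phi (listOf n w) := by
    rw [List.getD_eq_getElem _ 0 hmlt]; exact List.getElem_mem hmlt
  have hbd : (phi (listOf n w)).getD m 0 < 2 * n :=
    bdd_listOf ((phi_perm _).mem_iff.mp hmem)
  by_cases h : (phi (listOf n w)).getD m 0 < n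
  · rw [rOrd_of_true (by simpa using h)]
    simpa using Nat.mod_eq_of_lt h
  · rw [rOrd_of_false (by simpa using h)]
    have := mod2n n _ hbd
    simp only
    omega

lemma listOf_PhiP {n : ℕ} (hn : 0 < n) {w : Equiv.Perm (Fin n × Bool)} (hw : IsSignedPerm w) :
    listOf n (PhiP hn w) = phi (listOf n w) := by
  apply List.ext_get
  · rw [length_listOf, (phi_perm _).length_eq, length_listOf]
  · intro i h1 h2
    have hi : i < n := by rwa [length_listOf] at h1
    rw [List.get_eq_getElem, List.get_eq_getElem, ← List.getD_eq_getElem _ 0 h1,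
      ← List.getD_eq_getElem _ 0 h2, getD_listOf _ hi, rOrd_oneLine_PhiP hn hw hi]

lemma isSigned_PhiP {n : ℕ} (hn : 0 < n) {w : Equiv.Perm (Fin n × Bool)} (hw : IsSignedPerm w) :
    IsSignedPerm (PhiP hn w) := by
  intro z
  rw [PhiP_apply hn hw, PhiP_apply hn hw]
  unfold decoded
  refine Prod.ext_iff.mpr ⟨rfl, ?_⟩
  simp only
  cases z.2 <;> cases hdc : decide ((phi (listOf n w)).getD (z.1 : ℕ) 0 < n) <;> simp

lemma eq_of_listOf {n : ℕ} {w w' : Equiv.Perm (Fin n × Bool)}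
    (hw : IsSignedPerm w) (hw' : IsSignedPerm w')
    (h : listOf n w = listOf n w') : w = w' := by
  apply Equiv.ext
  rintro ⟨m, b⟩
  have hfalse : w (m, false) = w' (m, false) := by
    have hro : rOrd n (oneLine w (m : ℕ)) = rOrd n (oneLine w' (m : ℕ)) := by
      rw [← getD_listOf w m.isLt, ← getD_listOf w' m.isLt, h]
    have hol := rOrd_inj (oneLine_fst_lt w m.isLt) (oneLine_fst_lt w' m.isLt) hro
    rw [oneLine_lt w m.isLt, oneLine_lt w' m.isLt] at hol
    injection hol with t1 t2
    simp only [Fin.eta] at t1 t2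
    exact Prod.ext_iff.mpr ⟨Fin.ext t1, t2⟩
  cases b
  · exact hfalse
  · have h1 := hw (m, false)
    have h2 := hw' (m, false)
    simp only [Bool.not_false] at h1 h2
    rw [h1, h2, hfalse]

lemma countP_sum (q : ℕ → Bool) (l : List ℕ) :
    l.countP q = ∑ i ∈ Finset.range l.length, (if q (l.getD i 0) = true then 1 else 0) := by
  induction l with
  | nil => simp
  | cons a t ih =>
      rw [List.countP_cons, List.length_cons, Finset.sum_range_succ']
      simp only [List.getD_cons_succ, List.getD_cons_zero]
      rw [ih]

lemma inv_eq_card (l : List ℕ) :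
    inv l = ((Finset.range l.length ×ˢ Finset.range l.length).filter
      (fun pq => pq.1 < pq.2 ∧ l.getD pq.2 0 < l.getD pq.1 0)).card := by
  induction l using List.reverseRecOn with
  | nil => simp [inv]
  | append_singleton t x ih =>
      rw [inv_snoc, ih]
      have hlen : (t ++ [x]).length = t.length + 1 := by simp
      rw [Finset.card_filter, Finset.card_filter, countP_sum]
      simp only [hlen]
      rw [Finset.sum_product, Finset.sum_product, Finset.sum_range_succ]
      have hlast : (∑ q ∈ Finset.range (t.length + 1),
          if t.length < q ∧ (t ++ [x]).getD q 0 < (t ++ [x]).getD t.length 0 then 1 else 0) = 0 := by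
        apply Finset.sum_eq_zero
        intro q hq
        rw [Finset.mem_range] at hq
        rw [if_neg]
        rintro ⟨hq1, _⟩
        omega
      rw [hlast, add_zero]
      have hstep : ∀ p ∈ Finset.range t.length,
          (∑ q ∈ Finset.range (t.length + 1),
            if p < q ∧ (t ++ [x]).getD q 0 < (t ++ [x]).getD p 0 then 1 else 0)
          = (∑ q ∈ Finset.range t.length,
              if p < q ∧ t.getD q 0 < t.getD p 0 then 1 else 0)
            + (if x < t.getD p 0 then 1 else 0) := by
        intro p hp
        rw [Finset.mem_range] at hp
        rw [Finset.sum_range_succ]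
        congr 1
        · apply Finset.sum_congr rfl
          intro q hq
          rw [Finset.mem_range] at hq
          rw [List.getD_append _ _ _ _ hq, List.getD_append _ _ _ _ hp]
        · rw [List.getD_append_right _ _ _ _ (le_refl t.length), Nat.sub_self,
            List.getD_append _ _ _ _ hp]
          simp only [List.getD_cons_zero]
          rw [if_congr (show (p < t.length ∧ x < t.getD p 0) ↔ x < t.getD p 0 from
            ⟨fun h => h.2, fun h => ⟨hp, h⟩⟩) rfl rfl]
      rw [Finset.sum_congr rfl hstep, Finset.sum_add_distrib]
      congr 1
      apply Finset.sum_congr rfl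
      intro p _
      simp

lemma maj_sum_eq (l : List ℕ) :
    (∑ p ∈ Finset.range (l.length - 1), if l.getD (p+1) 0 < l.getD p 0 then p + 1 else 0)
      = majA l.reverse := by
  induction l using List.reverseRecOn with
  | nil => simp [majA]
  | append_singleton t x ih =>
      by_cases ht : t = []
      · subst ht
        simp [majA]
      · obtain ⟨c, cs, hrev⟩ : ∃ c cs, t.reverse = c :: cs := by
          cases hr : t.reverse with
          | nil =>
              exfalso
              have := congrArg List.reverse hr
              simp at this
              exact ht this
          | cons c cs => exact ⟨c, cs, rfl⟩
        have hrev2 : (t ++ [x]).reverse = x :: c :: cs := by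
          rw [List.reverse_append]
          simp [hrev]
        rw [hrev2]
        have hmaj : majA (x :: c :: cs) = (if x < c then cs.length + 1 else 0) + majA (c :: cs) :=
          rfl
        rw [hmaj, add_comm (if x < c then cs.length + 1 else 0) (majA (c :: cs)), ← hrev, ← ih]
        have htpos : 0 < t.length := List.length_pos_iff.mpr ht
        have hcs : cs.length + 1 = t.length := by
          have := congrArg List.length hrev
          simp at this
          omega
        have hget : t.getD (t.length - 1) 0 = c := by
          have h1 : t.getLast? = some c := by
            rw [← List.head?_reverse, hrev]
            rfl
          rw [List.getLast?_eq_getLast (l := t) ht] at h1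
          have h3 := Option.some.inj h1
          rw [List.getD_eq_getElem _ 0 (by omega), ← List.getLast_eq_getElem (l := t) ht, h3]
        have hN : (t ++ [x]).length - 1 = t.length := by simp
        rw [hN]
        have hN1 : t.length = (t.length - 1) + 1 := by omega
        rw [hN1, Finset.sum_range_succ]
        congr 1
        · apply Finset.sum_congr rfl
          intro p hp
          rw [Finset.mem_range] at hp
          rw [List.getD_append _ _ _ _ (by omega), List.getD_append _ _ _ _ (by omega)]
        · rw [List.getD_append _ _ _ _ (by omega : t.length - 1 < t.length), hget]
          have hx : (t ++ [x]).getD (t.length - 1 + 1) 0 = x := by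
            rw [show t.length - 1 + 1 = t.length from by omega]
            rw [List.getD_append_right _ _ _ _ (le_refl t.length), Nat.sub_self]
            rfl
          rw [hx]
          rcases lt_or_ge x c with hxc | hxc
          · rw [if_pos hxc, if_pos hxc]
            omega
          · rw [if_neg (by omega), if_neg (by omega)]

lemma invB_eq {n : ℕ} (w : Equiv.Perm (Fin n × Bool)) : invB w = inv (listOf n w) := by
  rw [inv_eq_card, length_listOf]
  unfold invB
  congr 1
  apply Finset.filter_congr
  intro pq hpq
  rw [Finset.mem_product, Finset.mem_range, Finset.mem_range] at hpq
  rw [getD_listOf w hpq.1, getD_listOf w hpq.2]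

lemma majB_eq {n : ℕ} (w : Equiv.Perm (Fin n × Bool)) :
    majB w = majA (listOf n w).reverse := by
  rw [← maj_sum_eq, length_listOf]
  unfold majB
  apply Finset.sum_congr rfl
  intro p hp
  rw [Finset.mem_range] at hp
  rw [getD_listOf w (by omega), getD_listOf w (by omega)]

lemma barB_eq {n : ℕ} (w : Equiv.Perm (Fin n × Bool)) :
    barB w = (listOf n w).countP (fun r => decide (r < n)) := by
  unfold barB
  rw [countP_sum, length_listOf, Finset.card_filter]
  apply Finset.sum_congr rfl
  intro p hp
  rw [Finset.mem_range] at hp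
  rw [getD_listOf w hp]
  congr 1
  rw [eq_iff_iff]
  constructor
  · intro h
    rw [rOrd_of_true h]
    simp
    exact oneLine_fst_lt w hp
  · intro h
    by_contra hb
    simp only [Bool.not_eq_true] at hb
    rw [rOrd_of_false hb] at h
    simp at h

end FW

open FW

/-- For every `n`, `k` and signed set `σ ∈ Σ^B(n)`, the number of signed permutations
`w ∈ B_n` with `sDes(w⁻¹) = σ` and `finv(w) = k` equals the number of `w ∈ B_n` with
`sDes(w⁻¹) = σ` and `fmaj(w) = k`. -/
theorem finv_fmaj_equidistributed (n : ℕ) (hn : 0 < n) (k : ℕ)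
    (σ : ℕ → Option Bool) (hσ : σ (n - 1) ≠ none ∧ ∀ p, n ≤ p → σ p = none) :
    Set.ncard { w : Equiv.Perm (Fin n × Bool) |
        IsSignedPerm w ∧ sDesPerm w.symm = σ ∧ finvB w = k }
      = Set.ncard { w : Equiv.Perm (Fin n × Bool) |
        IsSignedPerm w ∧ sDesPerm w.symm = σ ∧ fmajB w = k } := by
  classical
  set T : Set (Equiv.Perm (Fin n × Bool)) := {w | IsSignedPerm w} with hTdef
  have hstat : ∀ w : Equiv.Perm (Fin n × Bool), IsSignedPerm w →
      finvB (PhiP hn w) = fmajB w := by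
    intro w hw
    unfold finvB fmajB
    rw [invB_eq (PhiP hn w), listOf_PhiP hn hw, phi_inv, barB_eq (PhiP hn w),
      listOf_PhiP hn hw, majB_eq w, barB_eq w, (phi_perm (listOf n w)).countP_eq]
  have hsdes : ∀ w : Equiv.Perm (Fin n × Bool), IsSignedPerm w →
      sDesPerm (PhiP hn w).symm = sDesPerm w.symm := by
    intro w hw
    apply sDes_eq hw (isSigned_PhiP hn hw)
    · intro r
      rw [listOf_PhiP hn hw]
      exact (phi_perm _).mem_iff
    · intro a
      rw [listOf_PhiP hn hw]
      exact phi_filter a _ (nodup_listOf n w)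
  have hinj : Set.InjOn (PhiP hn) T := by
    intro w hw w' hw' h
    apply eq_of_listOf hw hw'
    apply phi_inj
    rw [← listOf_PhiP hn hw, ← listOf_PhiP hn hw', h]
  have hmaps : Set.MapsTo (PhiP hn) T T := fun w hw => isSigned_PhiP hn hw
  have hbij : Set.BijOn (PhiP hn) T T :=
    (Set.Finite.injOn_iff_bijOn_of_mapsTo (Set.toFinite T) hmaps).mp hinj
  have himg : { w : Equiv.Perm (Fin n × Bool) |
        IsSignedPerm w ∧ sDesPerm w.symm = σ ∧ finvB w = k }
      = PhiP hn '' { w : Equiv.Perm (Fin n × Bool) |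
        IsSignedPerm w ∧ sDesPerm w.symm = σ ∧ fmajB w = k } := by
    ext w'
    constructor
    · rintro ⟨hw', hsd, hfv⟩
      obtain ⟨w, hwT, hPw⟩ := hbij.surjOn hw'
      refine ⟨w, ⟨hwT, ?_, ?_⟩, hPw⟩
      · rw [← hsdes w hwT, hPw]
        exact hsd
      · rw [← hstat w hwT, hPw]
        exact hfv
    · rintro ⟨w, ⟨hwT, hsd, hfm⟩, rfl⟩
      exact ⟨isSigned_PhiP hn hwT, (hsdes w hwT).trans hsd, (hstat w hwT).trans hfm⟩
  rw [himg]
  exact Set.ncard_image_of_injOn (hinj.mono (fun w hw => hw.1))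
end

section
/- For n ≥ 2, the number of B-arc permutations in B_n equals n·2^n, where w ∈ B_n is a B-arc permutation if, identifying Ω_n with ℤ_{2n} by sending i ↦ i and ī ↦ n+i, the set {w(i), w(i+1), ..., w(n)} is an interval in ℤ_{2n} for every i ∈ [n]. -/
open Finset

/-- The identification of `Ω_n = {1,...,n,1̄,...,n̄}` with `ℤ_{2n}`, sending `i ↦ i`
and `ī ↦ n + i`. -/
def omegaToZMod (n : ℕ) (v : ℕ × Bool) : ZMod (2 * n) :=
  if v.2 then ((n + v.1 + 1 : ℕ) : ZMod (2 * n)) else ((v.1 + 1 : ℕ) : ZMod (2 * n))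

/-- `w ∈ B_n` is a B-arc permutation if `{w(i), w(i+1), ..., w(n)}` is an interval in
`ℤ_{2n}` for every `i ∈ [n]`. -/
def IsBArc {n : ℕ} (w : Equiv.Perm (Fin n × Bool)) : Prop :=
  ∀ i : Fin n, ∃ a : ZMod (2 * n),
    ((Finset.univ.filter fun p : Fin n => i ≤ p).image
        fun p : Fin n => omegaToZMod n (oneLine w (p : ℕ)))
      = (Finset.range (n - (i : ℕ))).image fun j => a + (j : ℕ)


namespace BArcAux

/-- Interval of length `m` starting at `b` in `ZMod (2n)`. -/
def I (n : ℕ) (b : ZMod (2 * n)) (m : ℕ) : Finset (ZMod (2 * n)) :=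
  (Finset.range m).image fun j => b + (j : ℕ)

lemma cast_inj_of_lt {n : ℕ} (hn : 0 < n) {j k : ℕ} (hj : j < 2 * n) (hk : k < 2 * n)
    (h : (j : ZMod (2 * n)) = k) : j = k := by
  haveI : NeZero (2 * n) := ⟨by omega⟩
  have := congrArg ZMod.val h
  rwa [ZMod.val_cast_of_lt hj, ZMod.val_cast_of_lt hk] at this

def invOmega (n : ℕ) (hn : 0 < n) (x : ZMod (2 * n)) : Fin n × Bool :=
  if h1 : x.val = 0 then (⟨n - 1, by omega⟩, true)
  else if h2 : x.val ≤ n then (⟨x.val - 1, by omega⟩, false)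
  else (⟨x.val - n - 1, by
    have hv : x.val < 2 * n := @ZMod.val_lt (2 * n) ⟨by omega⟩ x
    omega⟩, true)

lemma omega_invOmega {n : ℕ} (hn : 0 < n) (x : ZMod (2 * n)) :
    omegaToZMod n (((invOmega n hn x).1 : ℕ), (invOmega n hn x).2) = x := by
  haveI : NeZero (2 * n) := ⟨by omega⟩
  have hv : x.val < 2 * n := ZMod.val_lt x
  unfold invOmega
  split_ifs with h1 h2
  · simp only [omegaToZMod]
    have h2n : (n + (n - 1) + 1 : ℕ) = 2 * n := by omega
    have hx0 : x = 0 := by rwa [ZMod.val_eq_zero] at h1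
    simp [h2n, hx0]
  · simp only [omegaToZMod]
    have : (x.val - 1 + 1 : ℕ) = x.val := by omega
    simp [this, ZMod.natCast_zmod_val]
  · simp only [omegaToZMod]
    have : (n + (x.val - n - 1) + 1 : ℕ) = x.val := by omega
    simp [this, ZMod.natCast_zmod_val]

lemma invOmega_omega {n : ℕ} (hn : 0 < n) (k : Fin n) (b : Bool) :
    invOmega n hn (omegaToZMod n ((k : ℕ), b)) = (k, b) := by
  haveI : NeZero (2 * n) := ⟨by omega⟩
  cases b
  · have hval : (omegaToZMod n ((k : ℕ), false)).val = (k : ℕ) + 1 := by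
      simp only [omegaToZMod]
      exact ZMod.val_cast_of_lt (by omega)
    unfold invOmega
    rw [dif_neg (by omega), dif_pos (by omega)]
    simp [hval]
  · by_cases hk : (k : ℕ) = n - 1
    · have hval : (omegaToZMod n ((k : ℕ), true)).val = 0 := by
        simp only [omegaToZMod]
        have : (n + (k : ℕ) + 1 : ℕ) = 2 * n := by omega
        simp [this]
      unfold invOmega
      rw [dif_pos hval]
      simp [Prod.ext_iff, Fin.ext_iff, hk]
    · have hval : (omegaToZMod n ((k : ℕ), true)).val = n + (k : ℕ) + 1 := by
        simp only [omegaToZMod]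
        have hklt : (k : ℕ) < n := k.isLt
        exact ZMod.val_cast_of_lt (by omega)
      unfold invOmega
      rw [dif_neg (by omega), dif_neg (by omega)]
      simp only [hval, Prod.ext_iff, Fin.ext_iff]
      exact ⟨by omega, trivial⟩

lemma abs_invOmega {n : ℕ} (hn : 0 < n) (x : ZMod (2 * n)) :
    ((invOmega n hn x).1 : ℕ) = (x.val + (n - 1)) % n := by
  haveI : NeZero (2 * n) := ⟨by omega⟩
  have hv : x.val < 2 * n := ZMod.val_lt x
  unfold invOmega
  split_ifs with h1 h2
  · simp only []
    rw [h1, Nat.zero_add, Nat.mod_eq_of_lt (by omega)]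
  · simp only []
    have : x.val + (n - 1) = (x.val - 1) + 1 * n := by omega
    rw [this, Nat.add_mul_mod_self_right, Nat.mod_eq_of_lt (by omega)]
  · simp only []
    have : x.val + (n - 1) = (x.val - n - 1) + 2 * n := by omega
    rw [this, Nat.add_mul_mod_self_right, Nat.mod_eq_of_lt (by omega)]

lemma mem_I {n : ℕ} (hn : 0 < n) {b x : ZMod (2 * n)} {m : ℕ} (hm : m ≤ 2 * n) :
    x ∈ I n b m ↔ (x - b).val < m := by
  haveI : NeZero (2 * n) := ⟨by omega⟩
  simp only [I, Finset.mem_image, Finset.mem_range]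
  constructor
  · rintro ⟨j, hj, rfl⟩
    have hd : (b + (j : ℕ) - b) = ((j : ℕ) : ZMod (2 * n)) := by ring
    rw [hd, ZMod.val_cast_of_lt (by omega)]
    exact hj
  · intro h
    exact ⟨(x - b).val, h, by rw [ZMod.natCast_zmod_val]; ring⟩

lemma peel {n : ℕ} (hn : 2 ≤ n) {m : ℕ} (hm : 1 ≤ m) (hmn : m + 1 ≤ n)
    {b b' x : ZMod (2 * n)} (hx : x ∉ I n b' m)
    (hS : I n b (m + 1) = insert x (I n b' m)) :
    (x = b' - 1 ∧ b = b' - 1) ∨ (x = b' + (m : ℕ) ∧ b = b') := by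
  haveI : NeZero (2 * n) := ⟨by omega⟩
  have h0 : (0 : ℕ) < n := by omega
  have mem1 : ∀ y, y ∈ I n b (m + 1) ↔ (y - b).val < m + 1 := fun y => mem_I h0 (by omega)
  have mem2 : ∀ y, y ∈ I n b' m ↔ (y - b').val < m := fun y => mem_I h0 (by omega)
  set t := (b' - b).val with ht
  have htb : ((t : ℕ) : ZMod (2 * n)) = b' - b := ZMod.natCast_zmod_val _
  have ht2n : t < 2 * n := ZMod.val_lt _
  -- b' ∈ S
  have htm : t < m + 1 := by
    have : b' ∈ I n b (m + 1) := by
      rw [hS, Finset.mem_insert]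
      right; rw [mem2, sub_self, ZMod.val_zero]; omega
    rwa [mem1] at this
  -- b' + (m-1) ∈ S, giving t ≤ 1
  have ht1 : t ≤ 1 := by
    have hmem : b' + ((m - 1 : ℕ) : ZMod (2 * n)) ∈ I n b (m + 1) := by
      rw [hS, Finset.mem_insert]
      right; rw [mem2, add_sub_cancel_left, ZMod.val_cast_of_lt (by omega)]
      omega
    rw [mem1] at hmem
    have hd : b' + ((m - 1 : ℕ) : ZMod (2 * n)) - b = ((t + (m - 1) : ℕ) : ZMod (2 * n)) := by
      push_cast
      rw [htb]; ring
    rw [hd, ZMod.val_cast_of_lt (by omega)] at hmem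
    omega
  -- x ∈ S
  set s := (x - b).val with hs
  have hsb : ((s : ℕ) : ZMod (2 * n)) = x - b := ZMod.natCast_zmod_val _
  have hs2n : s < 2 * n := ZMod.val_lt _
  have hsm : s < m + 1 := by
    have : x ∈ I n b (m + 1) := by rw [hS]; exact Finset.mem_insert_self _ _
    rwa [mem1] at this
  have hxout : m ≤ (x - b').val := by
    rw [mem2] at hx; omega
  interval_cases t
  · -- t = 0 : b' = b
    have hbb : b' = b := by
      have : b' - b = 0 := by rw [← htb]; simp
      exact sub_eq_zero.mp this
    right
    have hsm' : s = m := by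
      rw [hbb] at hxout
      omega
    constructor
    · have : x - b = ((m : ℕ) : ZMod (2 * n)) := by rw [← hsb, hsm']
      rw [hbb]
      linear_combination this
    · exact hbb.symm
  · -- t = 1 : b' = b + 1
    have hbb : b' = b + 1 := by
      have : b' - b = 1 := by rw [← htb]; simp
      linear_combination this
    left
    have hs0 : s = 0 := by
      by_contra hs0
      have h1s : 1 ≤ s := by omega
      have hd : x - b' = ((s - 1 : ℕ) : ZMod (2 * n)) := by
        rw [hbb]
        push_cast [h1s]
        rw [hsb]; ring
      rw [hd, ZMod.val_cast_of_lt (by omega)] at hxout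
      omega
    have hxb : x = b := by
      have : x - b = 0 := by rw [← hsb, hs0]; simp
      linear_combination this
    constructor
    · rw [hxb, hbb]; ring
    · rw [hbb]; ring


def fcnt (g : ℕ → Bool) (i : ℕ) : ℕ := ((Finset.range i).filter fun j => g j = false).card
def tcnt (g : ℕ → Bool) (i : ℕ) : ℕ := ((Finset.range i).filter fun j => g j = true).card
def pos (n : ℕ) (g : ℕ → Bool) (i : ℕ) : ℕ := if g i then n - 1 - tcnt g i else fcnt g i

lemma fcnt_succ (g : ℕ → Bool) (i : ℕ) :
    fcnt g (i + 1) = fcnt g i + (if g i then 0 else 1) := by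
  simp only [fcnt, Finset.range_add_one, Finset.filter_insert]
  split_ifs with h h2 h2 <;> simp_all [Finset.card_insert_of_notMem]

lemma tcnt_succ (g : ℕ → Bool) (i : ℕ) :
    tcnt g (i + 1) = tcnt g i + (if g i then 1 else 0) := by
  simp only [tcnt, Finset.range_add_one, Finset.filter_insert]
  split_ifs with h h2 h2 <;> simp_all [Finset.card_insert_of_notMem]

lemma fcnt_add_tcnt (g : ℕ → Bool) (i : ℕ) : fcnt g i + tcnt g i = i := by
  induction i with
  | zero => simp [fcnt, tcnt]
  | succ k ih =>
    rw [fcnt_succ, tcnt_succ]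
    split_ifs <;> omega

lemma fcnt_mono (g : ℕ → Bool) {i j : ℕ} (h : i ≤ j) : fcnt g i ≤ fcnt g j :=
  Finset.card_le_card (Finset.filter_subset_filter _ (Finset.range_subset_range.mpr h))

lemma tcnt_mono (g : ℕ → Bool) {i j : ℕ} (h : i ≤ j) : tcnt g i ≤ tcnt g j :=
  Finset.card_le_card (Finset.filter_subset_filter _ (Finset.range_subset_range.mpr h))

lemma tcnt_le (g : ℕ → Bool) (i : ℕ) : tcnt g i ≤ i := by
  have := fcnt_add_tcnt g i; omega

lemma fcnt_le (g : ℕ → Bool) (i : ℕ) : fcnt g i ≤ i := by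
  have := fcnt_add_tcnt g i; omega

lemma pos_lt {n : ℕ} (hn : 0 < n) (g : ℕ → Bool) {i : ℕ} (hi : i < n) : pos n g i < n := by
  unfold pos
  have h1 := fcnt_le g i
  split_ifs <;> omega

lemma image_pos_aux {n : ℕ} (g : ℕ → Bool) :
    ∀ k, k ≤ n → (Finset.Ico (n - k) n).image (pos n g)
      = Finset.Ico (fcnt g (n - k)) (n - tcnt g (n - k)) := by
  intro k
  induction k with
  | zero =>
    intro _
    have h1 := fcnt_add_tcnt g n
    have h2 : fcnt g (n - 0) = n - tcnt g (n - 0) := by simp; omega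
    rw [h2]
    simp
  | succ k ih =>
    intro hk
    set i := n - (k + 1) with hidef
    have hik : i + 1 = n - k := by omega
    have hin : i < n := by omega
    have hins : Finset.Ico i n = insert i (Finset.Ico (i + 1) n) := by
      rw [← Finset.insert_Ico_add_one_left_eq_Ico hin]
    have hfa := fcnt_add_tcnt g i
    have hf1 := fcnt_succ g i
    have ht1 := tcnt_succ g i
    rw [hins, Finset.image_insert, hik, ih (by omega), ← hik]
    cases hgi : g i with
    | false =>
      have hpos : pos n g i = fcnt g i := by simp [pos, hgi]
      rw [hpos]
      have e1 : fcnt g (i + 1) = fcnt g i + 1 := by rw [hf1, hgi]; simp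
      have e2 : tcnt g (i + 1) = tcnt g i := by rw [ht1, hgi]; simp
      rw [e1, e2]
      exact Finset.insert_Ico_add_one_left_eq_Ico (by omega)
    | true =>
      have hpos : pos n g i = n - 1 - tcnt g i := by simp [pos, hgi]
      rw [hpos]
      have e1 : fcnt g (i + 1) = fcnt g i := by rw [hf1, hgi]; simp
      have e2 : tcnt g (i + 1) = tcnt g i + 1 := by rw [ht1, hgi]; simp
      rw [e1, e2]
      have e3 : n - tcnt g i = (n - 1 - tcnt g i) + 1 := by omega
      have e4 : n - (tcnt g i + 1) = n - 1 - tcnt g i := by omega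
      rw [e3, e4]
      exact (Nat.Ico_succ_right_eq_insert_Ico (by omega)).symm

lemma image_pos {n : ℕ} (g : ℕ → Bool) {i : ℕ} (hi : i ≤ n) :
    (Finset.Ico i n).image (pos n g) = Finset.Ico (fcnt g i) (n - tcnt g i) := by
  have := image_pos_aux (n := n) g (n - i) (by omega)
  rwa [show n - (n - i) = i by omega] at this

lemma pos_injOn {n : ℕ} (g : ℕ → Bool) : Set.InjOn (pos n g) (Finset.Ico 0 n) := by
  apply Finset.injOn_of_card_image_eq
  rw [image_pos g (by omega)]
  have : fcnt g 0 = 0 := by simp [fcnt]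
  have h2 : tcnt g 0 = 0 := by simp [tcnt]
  rw [this, h2]
  simp

lemma pos_order {n : ℕ} (hn : 2 ≤ n) (g : ℕ → Bool) (hlast : g (n - 1) = false) {i : ℕ}
    (hi : i < n - 1) : (g i = true ↔ pos n g (n - 1) < pos n g i) := by
  have hplast : pos n g (n - 1) = fcnt g (n - 1) := by simp [pos, hlast]
  have hfa := fcnt_add_tcnt g (n - 1)
  have hf1 := fcnt_succ g i
  have ht1 := tcnt_succ g i
  cases hgi : g i with
  | false =>
    have hpos : pos n g i = fcnt g i := by simp [pos, hgi]
    have : fcnt g (i + 1) ≤ fcnt g (n - 1) := fcnt_mono g (by omega)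
    simp [hgi] at hf1 ht1
    rw [hplast, hpos]
    constructor
    · intro h; exact absurd h (by simp)
    · intro h; exact absurd h (by omega)
  | true =>
    have hpos : pos n g i = n - 1 - tcnt g i := by simp [pos, hgi]
    have : tcnt g (i + 1) ≤ tcnt g (n - 1) := tcnt_mono g (by omega)
    simp [hgi] at hf1 ht1
    rw [hplast, hpos]
    refine ⟨fun _ => by omega, fun _ => rfl⟩

section Perm

variable {n : ℕ}

noncomputable def mkPerm (u : Fin n → Fin n × Bool) (habs : Function.Injective fun i => (u i).1) :
    Equiv.Perm (Fin n × Bool) :=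
  Equiv.ofBijective (fun p => ((u p.1).1, xor p.2 (u p.1).2))
    (Finite.injective_iff_bijective.mp (by
      rintro ⟨i, b⟩ ⟨j, c⟩ h
      simp only [Prod.mk.injEq] at h
      obtain ⟨h1, h2⟩ := h
      have hij : i = j := habs h1
      subst hij
      have hbc : b = c := by
        cases b <;> cases c <;> simp_all
      simp [hbc]))

lemma mkPerm_apply (u : Fin n → Fin n × Bool) (habs : Function.Injective fun i => (u i).1)
    (i : Fin n) (b : Bool) : mkPerm u habs (i, b) = ((u i).1, xor b (u i).2) := rfl

lemma mkPerm_signed (u : Fin n → Fin n × Bool) (habs : Function.Injective fun i => (u i).1) :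
    IsSignedPerm (mkPerm u habs) := by
  rintro ⟨i, b⟩
  show mkPerm u habs (i, !b) = _
  rw [mkPerm_apply, mkPerm_apply]
  cases b <;> cases hb : (u i).2 <;> simp [hb]

lemma oneLine_mkPerm (u : Fin n → Fin n × Bool) (habs : Function.Injective fun i => (u i).1)
    {p : ℕ} (hp : p < n) :
    oneLine (mkPerm u habs) p = (((u ⟨p, hp⟩).1 : ℕ), (u ⟨p, hp⟩).2) := by
  rw [oneLine, dif_pos hp, mkPerm_apply]
  simp

lemma perm_eq_of_oneLine_eq {w w' : Equiv.Perm (Fin n × Bool)}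
    (hw : IsSignedPerm w) (hw' : IsSignedPerm w')
    (h : ∀ p, p < n → oneLine w p = oneLine w' p) : w = w' := by
  apply Equiv.ext
  rintro ⟨i, b⟩
  have hfalse : w (i, false) = w' (i, false) := by
    have h2 := h i i.isLt
    rw [oneLine, oneLine, dif_pos i.isLt, dif_pos i.isLt] at h2
    simp only [Prod.mk.injEq] at h2
    obtain ⟨h3, h4⟩ := h2
    have : (⟨(i : ℕ), i.isLt⟩ : Fin n) = i := Fin.eta i i.isLt
    rw [this] at h3 h4
    exact Prod.ext (Fin.ext h3) h4
  cases b
  · exact hfalse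
  · have e1 := hw (i, false)
    have e2 := hw' (i, false)
    simp only [Bool.not_false] at e1 e2
    rw [e1, e2, hfalse]

end Perm

section Decode

variable {n : ℕ}

def eps' (n : ℕ) (ε : Fin (n - 1) → Bool) : ℕ → Bool := fun j =>
  if h : j < n - 1 then ε ⟨j, h⟩ else false

def decodeU (hn : 2 ≤ n) (a : ZMod (2 * n)) (ε : Fin (n - 1) → Bool) :
    Fin n → Fin n × Bool := fun i =>
  invOmega n (by omega) (a + (pos n (eps' n ε) (i : ℕ) : ℕ))

lemma decodeU_abs_inj (hn : 2 ≤ n) (a : ZMod (2 * n)) (ε : Fin (n - 1) → Bool) :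
    Function.Injective fun i => ((decodeU hn a ε) i).1 := by
  haveI : NeZero (2 * n) := ⟨by omega⟩
  set g := eps' n ε with hg
  have key : ∀ i : Fin n, (((decodeU hn a ε i).1 : Fin n) : ℕ)
      = ((a.val + (n - 1)) + pos n g (i : ℕ)) % n := by
    intro i
    show ((invOmega n (by omega) (a + (pos n g (i : ℕ) : ℕ))).1 : ℕ) = _
    rw [abs_invOmega (by omega)]
    have hplt : pos n g (i : ℕ) < n := pos_lt (by omega) g i.isLt
    rw [ZMod.val_add, ZMod.val_cast_of_lt (n := 2 * n) (by omega)]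
    have hmm : (a.val + pos n g (i : ℕ)) % (2 * n) % n = (a.val + pos n g (i : ℕ)) % n :=
      Nat.mod_mod_of_dvd _ ⟨2, by ring⟩
    rw [Nat.add_mod, hmm, ← Nat.add_mod]
    congr 1
    omega
  intro i j hij
  have h2 : ((a.val + (n - 1)) + pos n g (i : ℕ)) % n = ((a.val + (n - 1)) + pos n g (j : ℕ)) % n := by
    rw [← key, ← key]
    exact congrArg (fun x : Fin n => (x : ℕ)) hij
  have h3 : pos n g (i : ℕ) % n = pos n g (j : ℕ) % n :=
    Nat.ModEq.add_left_cancel' _ h2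
  have hpi : pos n g (i : ℕ) < n := pos_lt (by omega) g i.isLt
  have hpj : pos n g (j : ℕ) < n := pos_lt (by omega) g j.isLt
  rw [Nat.mod_eq_of_lt hpi, Nat.mod_eq_of_lt hpj] at h3
  have := pos_injOn (n := n) g (by simpa using i.isLt) (by simpa using j.isLt) h3
  exact Fin.ext this

lemma filter_image (i : Fin n) (f : ℕ → ZMod (2 * n)) :
    ((Finset.univ.filter fun p : Fin n => i ≤ p).image fun p : Fin n => f (p : ℕ))
      = (Finset.Ico (i : ℕ) n).image f := by
  ext x
  simp only [Finset.mem_image, Finset.mem_filter, Finset.mem_univ, true_and, Finset.mem_Ico,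
    Fin.le_def]
  constructor
  · rintro ⟨p, hp, rfl⟩
    exact ⟨(p : ℕ), ⟨hp, p.isLt⟩, rfl⟩
  · rintro ⟨m, ⟨h1, h2⟩, rfl⟩
    exact ⟨⟨m, h2⟩, h1, rfl⟩

lemma word_mkPerm_decodeU (hn : 2 ≤ n) (a : ZMod (2 * n)) (ε : Fin (n - 1) → Bool)
    {p : ℕ} (hp : p < n) :
    omegaToZMod n (oneLine (mkPerm (decodeU hn a ε) (decodeU_abs_inj hn a ε)) p)
      = a + (pos n (eps' n ε) p : ℕ) := by
  rw [oneLine_mkPerm _ _ hp]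
  show omegaToZMod n (((invOmega n _ _).1 : ℕ), (invOmega n _ _).2) = _
  exact omega_invOmega (by omega) _

lemma decode_barc (hn : 2 ≤ n) (a : ZMod (2 * n)) (ε : Fin (n - 1) → Bool) :
    IsBArc (mkPerm (decodeU hn a ε) (decodeU_abs_inj hn a ε)) := by
  intro i
  set g := eps' n ε with hg
  refine ⟨a + (fcnt g (i : ℕ) : ℕ), ?_⟩
  have h1 : ((Finset.univ.filter fun p : Fin n => i ≤ p).image
      fun p : Fin n => omegaToZMod n
        (oneLine (mkPerm (decodeU hn a ε) (decodeU_abs_inj hn a ε)) (p : ℕ)))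
      = (Finset.Ico (i : ℕ) n).image fun p => a + (pos n g p : ℕ) := by
    rw [filter_image i (fun m => omegaToZMod n
      (oneLine (mkPerm (decodeU hn a ε) (decodeU_abs_inj hn a ε)) m))]
    apply Finset.image_congr
    intro p hp
    simp only [Finset.coe_Ico, Set.mem_Ico] at hp
    exact word_mkPerm_decodeU hn a ε hp.2
  have hcomp : (Finset.Ico ((i : ℕ)) n).image (fun p => a + ((pos n g p : ℕ) : ZMod (2 * n)))
      = ((Finset.Ico ((i : ℕ)) n).image (pos n g)).image (fun t : ℕ => a + (t : ℕ)) := by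
    rw [Finset.image_image]
    rfl
  rw [h1, hcomp, image_pos g (le_of_lt i.isLt)]
  -- now RHS
  have h2 : (Finset.range (n - (i : ℕ))).image (fun j => a + (fcnt g (i : ℕ) : ℕ) + (j : ℕ))
      = (Finset.Ico (fcnt g (i : ℕ)) (n - tcnt g (i : ℕ))).image fun t : ℕ => a + (t : ℕ) := by
    have h3 : (Finset.range (n - (i : ℕ))).image (fun j => fcnt g (i : ℕ) + j)
        = Finset.Ico (fcnt g (i : ℕ)) (n - tcnt g (i : ℕ)) := by
      rw [Finset.range_eq_Ico, Finset.image_add_left_Ico]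
      have e5 := fcnt_add_tcnt g (i : ℕ)
      have e6 := tcnt_le g (i : ℕ)
      have e7 : (i : ℕ) ≤ n := le_of_lt i.isLt
      congr 1 <;> omega
    rw [← h3, Finset.image_image]
    apply Finset.image_congr
    intro j _
    show a + (fcnt g (i : ℕ) : ℕ) + (j : ℕ) = a + ((fcnt g (i : ℕ) + j : ℕ) : ZMod (2 * n))
    push_cast
    ring
  rw [← h2]

noncomputable def decode (hn : 2 ≤ n) (a : ZMod (2 * n)) (ε : Fin (n - 1) → Bool) :
    { w : Equiv.Perm (Fin n × Bool) // IsSignedPerm w ∧ IsBArc w } :=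
  ⟨mkPerm (decodeU hn a ε) (decodeU_abs_inj hn a ε),
    mkPerm_signed _ _, decode_barc hn a ε⟩

lemma eps'_last (hn : 2 ≤ n) (ε : Fin (n - 1) → Bool) : eps' n ε (n - 1) = false := by
  simp [eps']

lemma decode_inj (hn : 2 ≤ n) : Function.Injective
    (fun q : ZMod (2 * n) × (Fin (n - 1) → Bool) => decode hn q.1 q.2) := by
  haveI : NeZero (2 * n) := ⟨by omega⟩
  rintro ⟨a, ε⟩ ⟨a', ε'⟩ h
  simp only [decode, Subtype.mk.injEq] at h
  have hword : ∀ p, p < n →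
      a + (pos n (eps' n ε) p : ℕ) = a' + (pos n (eps' n ε') p : ℕ) := by
    intro p hp
    rw [← word_mkPerm_decodeU hn a ε hp, ← word_mkPerm_decodeU hn a' ε' hp, h]
  have hcross : ∀ p, p < n →
      pos n (eps' n ε) p + pos n (eps' n ε') (n - 1)
        = pos n (eps' n ε') p + pos n (eps' n ε) (n - 1) := by
    intro p hp
    have h1 := hword p hp
    have h2 := hword (n - 1) (by omega)
    have hb1 : pos n (eps' n ε) p < n := pos_lt (by omega) _ hp
    have hb2 : pos n (eps' n ε') p < n := pos_lt (by omega) _ hp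
    have hb3 : pos n (eps' n ε) (n - 1) < n := pos_lt (by omega) _ (by omega)
    have hb4 : pos n (eps' n ε') (n - 1) < n := pos_lt (by omega) _ (by omega)
    have h3 : ((pos n (eps' n ε) p + pos n (eps' n ε') (n - 1) : ℕ) : ZMod (2 * n))
        = ((pos n (eps' n ε') p + pos n (eps' n ε) (n - 1) : ℕ) : ZMod (2 * n)) := by
      push_cast
      linear_combination h1 - h2
    exact cast_inj_of_lt (by omega) (by omega) (by omega) h3
  have heps : ε = ε' := by
    funext i
    have hi : (i : ℕ) < n - 1 := i.isLt
    have ho1 := pos_order hn (eps' n ε) (eps'_last hn ε) hi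
    have ho2 := pos_order hn (eps' n ε') (eps'_last hn ε') hi
    have hc := hcross (i : ℕ) (by omega)
    have he1 : eps' n ε (i : ℕ) = ε i := by simp [eps', hi]
    have he2 : eps' n ε' (i : ℕ) = ε' i := by simp [eps', hi]
    rw [he1] at ho1
    rw [he2] at ho2
    rw [Bool.eq_iff_iff, ho1, ho2]
    omega
  subst heps
  have ha : a = a' := by
    have h0 := hword 0 (by omega)
    exact add_right_cancel h0
  rw [ha]

lemma decode_surj (hn : 2 ≤ n)
    (W : { w : Equiv.Perm (Fin n × Bool) // IsSignedPerm w ∧ IsBArc w }) :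
    ∃ a ε, decode hn a ε = W := by
  haveI : NeZero (2 * n) := ⟨by omega⟩
  obtain ⟨w, hsigned, harc⟩ := W
  set v : ℕ → ZMod (2 * n) := fun p => omegaToZMod n (oneLine w p) with hv
  have harc' : ∀ i : Fin n, ∃ a : ZMod (2 * n),
      ((Finset.univ.filter fun p : Fin n => i ≤ p).image fun p : Fin n => v (p : ℕ))
        = (Finset.range (n - (i : ℕ))).image fun j => a + (j : ℕ) := harc
  choose bfun hbfun using harc'
  have hS : ∀ i : Fin n, (Finset.Ico ((i : ℕ)) n).image v = I n (bfun i) (n - (i : ℕ)) := by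
    intro i
    rw [← filter_image i v]
    exact hbfun i
  -- injectivity of v on [0, n)
  have hvinj : ∀ p q, p < n → q < n → v p = v q → p = q := by
    have h0 : (Finset.Ico 0 n).image v = I n (bfun ⟨0, by omega⟩) n := by
      have := hS ⟨0, by omega⟩
      simpa using this
    have hcard : ((Finset.Ico 0 n).image v).card = n := by
      rw [h0]
      have hinj2 : Set.InjOn (fun j : ℕ => bfun ⟨0, by omega⟩ + (j : ℕ))
          (Finset.range n) := by
        intro j hj k hk hjk
        simp only [Finset.coe_range, Set.mem_Iio] at hj hk
        have hcast : ((j : ℕ) : ZMod (2 * n)) = ((k : ℕ) : ZMod (2 * n)) := by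
          simp only at hjk
          linear_combination hjk
        exact cast_inj_of_lt (by omega) (by omega) (by omega) hcast
      rw [I, Finset.card_image_of_injOn hinj2, Finset.card_range]
    have hinj := Finset.injOn_of_card_image_eq (by rw [hcard]; simp)
    intro p q hp hq hpq
    exact hinj (by simp [hp]) (by simp [hq]) hpq
  set a := bfun ⟨0, by omega⟩ with ha
  set ε : Fin (n - 1) → Bool :=
    (fun i => !decide (v (i : ℕ) = bfun ⟨(i : ℕ), by omega⟩)) with hε
  set g := eps' n ε with hg
  have hgval : ∀ i : ℕ, (hi : i < n - 1) →
      (g i = false ↔ v i = bfun ⟨i, by omega⟩) := by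
    intro i hi
    simp [hg, eps', hε, hi]
  have hglast : g (n - 1) = false := by simp [hg, eps']
  -- the peeling step
  have hstep : ∀ i, (h : i + 1 < n) →
      (v i = bfun ⟨i, by omega⟩ ∧ bfun ⟨i + 1, h⟩ = bfun ⟨i, by omega⟩ + 1 ∧ g i = false) ∨
      (v i = bfun ⟨i, by omega⟩ + ((n - i - 1 : ℕ) : ZMod (2 * n)) ∧
        bfun ⟨i + 1, h⟩ = bfun ⟨i, by omega⟩ ∧ g i = true) := by
    intro i h
    have hxnot : v i ∉ I n (bfun ⟨i + 1, h⟩) (n - (i + 1)) := by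
      rw [← hS ⟨i + 1, h⟩]
      intro hmem
      simp only [Finset.mem_image, Finset.mem_Ico] at hmem
      obtain ⟨p, ⟨hp1, hp2⟩, hp3⟩ := hmem
      have := hvinj p i hp2 (by omega) hp3
      omega
    have hins : I n (bfun ⟨i, by omega⟩) (n - i)
        = insert (v i) (I n (bfun ⟨i + 1, h⟩) (n - (i + 1))) := by
      rw [← hS ⟨i, by omega⟩, ← hS ⟨i + 1, h⟩,
        show (Finset.Ico i n) = insert i (Finset.Ico (i + 1) n) from
          (Finset.insert_Ico_add_one_left_eq_Ico (by omega)).symm,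
        Finset.image_insert]
    have hm0 : n - (i + 1) = n - i - 1 := by omega
    have hm1 : n - i - 1 + 1 = n - i := by omega
    rw [hm0] at hxnot hins
    rw [← hm1] at hins
    have hpeel := peel hn (m := n - i - 1) (by omega) (by omega) hxnot hins
    have hine : i < n - 1 := by omega
    rcases hpeel with ⟨hx1, hx2⟩ | ⟨hx1, hx2⟩
    · left
      have hvb : v i = bfun ⟨i, by omega⟩ := by rw [hx1, hx2]
      refine ⟨hvb, by rw [hx2]; ring, ?_⟩
      rw [hgval i hine]
      exact hvb
    · right
      have hvb : v i = bfun ⟨i, by omega⟩ + ((n - i - 1 : ℕ) : ZMod (2 * n)) := by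
        rw [hx1, hx2]
      refine ⟨hvb, hx2.symm ▸ rfl, ?_⟩
      have hne : ¬ (v i = bfun ⟨i, by omega⟩) := by
        rw [hvb]
        intro hcon
        have hz : ((n - i - 1 : ℕ) : ZMod (2 * n)) = ((0 : ℕ) : ZMod (2 * n)) := by
          push_cast
          linear_combination hcon
        have := cast_inj_of_lt (n := n) (by omega) (by omega) (by omega) hz
        omega
      have := (hgval i hine).not.mpr hne
      simpa using this
  -- bfun values
  have hb : ∀ i, (h : i < n) → bfun ⟨i, h⟩ = a + (fcnt g i : ℕ) := by
    intro i
    induction i with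
    | zero =>
      intro h
      have : fcnt g 0 = 0 := by simp [fcnt]
      rw [this, ha]
      simp
    | succ k ih =>
      intro h
      have hk : k < n := by omega
      rcases hstep k h with ⟨hv1, hb1, hg1⟩ | ⟨hv1, hb1, hg1⟩
      · rw [hb1, ih hk]
        have he : fcnt g (k + 1) = fcnt g k + 1 := by rw [fcnt_succ, hg1]; simp
        rw [he]
        push_cast
        ring
      · rw [hb1, ih hk]
        have he : fcnt g (k + 1) = fcnt g k := by rw [fcnt_succ, hg1]; simp
        rw [he]
  -- word values
  have hword : ∀ p, p < n → v p = a + (pos n g p : ℕ) := by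
    intro p hp
    by_cases hlastp : p = n - 1
    · subst hlastp
      have h1 := hS ⟨n - 1, by omega⟩
      have h2 : Finset.Ico (n - 1) n = {n - 1} := by
        rw [show n = (n - 1) + 1 by omega]
        simp
      have h3 : n - (n - 1) = 1 := by omega
      rw [h2, h3, Finset.image_singleton] at h1
      have h4 : I n (bfun ⟨n - 1, by omega⟩) 1 = {bfun ⟨n - 1, by omega⟩} := by
        simp [I]
      rw [h4] at h1
      have h5 : v (n - 1) = bfun ⟨n - 1, by omega⟩ := by
        have := Finset.singleton_injective h1
        exact this
      rw [h5, hb (n - 1) (by omega)]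
      have : pos n g (n - 1) = fcnt g (n - 1) := by simp [pos, hglast]
      rw [this]
    · have hp1 : p + 1 < n := by omega
      rcases hstep p hp1 with ⟨hv1, _, hg1⟩ | ⟨hv1, _, hg1⟩
      · rw [hv1, hb p (by omega)]
        have : pos n g p = fcnt g p := by simp [pos, hg1]
        rw [this]
      · rw [hv1, hb p (by omega)]
        have hfa := fcnt_add_tcnt g p
        have : pos n g p = fcnt g p + (n - p - 1) := by
          simp only [pos, hg1, if_true]
          omega
        rw [this]
        push_cast
        ring
  -- conclude
  refine ⟨a, ε, ?_⟩
  apply Subtype.ext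
  show mkPerm (decodeU hn a ε) (decodeU_abs_inj hn a ε) = w
  apply perm_eq_of_oneLine_eq (mkPerm_signed _ _) hsigned
  intro p hp
  rw [oneLine_mkPerm _ _ hp]
  have h1 : decodeU hn a ε ⟨p, hp⟩ = invOmega n (by omega : 0 < n) (v p) := by
    show invOmega n _ _ = invOmega n _ _
    congr 1
    show a + ((pos n (eps' n ε) ((⟨p, hp⟩ : Fin n) : ℕ) : ℕ) : ZMod (2 * n)) = v p
    rw [show ((⟨p, hp⟩ : Fin n) : ℕ) = p from rfl, ← hg, ← hword p hp]
  rw [h1]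
  have h2 : v p = omegaToZMod n ((((w (⟨p, hp⟩, false)).1 : Fin n) : ℕ),
      (w (⟨p, hp⟩, false)).2) := by
    rw [hv]
    simp only [oneLine, dif_pos hp]
  rw [h2, invOmega_omega (by omega)]
  rw [oneLine, dif_pos hp]

end Decode

end BArcAux


/-- For `n ≥ 2`, the number of B-arc permutations in `B_n` equals `n · 2^n`. -/
theorem card_BArc (n : ℕ) (hn : 2 ≤ n) :
    Nat.card { w : Equiv.Perm (Fin n × Bool) // IsSignedPerm w ∧ IsBArc w }
      = n * 2 ^ n := by
  have hbij : Function.Bijective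
      (fun q : ZMod (2 * n) × (Fin (n - 1) → Bool) => BArcAux.decode hn q.1 q.2) := by
    constructor
    · exact BArcAux.decode_inj hn
    · intro W
      obtain ⟨a, ε, h⟩ := BArcAux.decode_surj hn W
      exact ⟨(a, ε), h⟩
  rw [← Nat.card_eq_of_bijective _ hbij, Nat.card_prod, Nat.card_zmod, Nat.card_fun,
    Nat.card_eq_fintype_card (α := Bool), Nat.card_eq_fintype_card (α := Fin (n - 1)),
    Fintype.card_bool, Fintype.card_fin]
  have h2 : 2 ^ n = 2 ^ (n - 1) * 2 := by
    rw [← pow_succ, show n - 1 + 1 = n by omega]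
  rw [h2]
  ring
end

section
/- For n ≥ 2, the number of signed arc permutations in B_n equals n·2^n. -/
open Finset

/-- The absolute value `|w(q+1)|` of the `(q+1)`-st letter of `w`, viewed in `ℤ_n`
(identifying `n` with `0`). -/
def absValZ (n : ℕ) {m : ℕ} (w : Equiv.Perm (Fin m × Bool)) (q : ℕ) : ZMod n :=
  (((oneLine w q).1 + 1 : ℕ) : ZMod n)

/-- `w ∈ B_n` is a signed arc permutation if for each `i ∈ {2, ..., n−1}`:
(a) `{|w(1)|, ..., |w(i−1)|}` is an interval in `ℤ_n`, and
(b) `w(i)` is unbarred if `|w(i)| − 1` lies in that set (mod `n`), and barred if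
`|w(i)| + 1` lies in that set (mod `n`). -/
def IsSignedArc {n : ℕ} (w : Equiv.Perm (Fin n × Bool)) : Prop :=
  ∀ i : ℕ, 2 ≤ i → i ≤ n - 1 →
    (∃ a : ZMod n,
      ((Finset.range (i - 1)).image fun q => absValZ n w q)
        = (Finset.range (i - 1)).image fun j => a + (j : ℕ)) ∧
    ((absValZ n w (i - 1) - 1 ∈ (Finset.range (i - 1)).image fun q => absValZ n w q) →
      (oneLine w (i - 1)).2 = false) ∧
    ((absValZ n w (i - 1) + 1 ∈ (Finset.range (i - 1)).image fun q => absValZ n w q) →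
      (oneLine w (i - 1)).2 = true)


namespace SArcAux


/-- number of `true` signs among positions `1,…,k−1`. -/
def lcnt (ε : ℕ → Bool) (k : ℕ) : ℕ := ((Finset.Ico 1 k).filter fun p => ε p).card

/-- left endpoint of the prefix interval of length `k`. -/
def Lend (n : ℕ) (a : ZMod n) (ε : ℕ → Bool) (k : ℕ) : ZMod n := a - (lcnt ε k : ℕ)

/-- the canonical word of a signed arc permutation with parameters `(a, ε)`. -/
def Fword (n : ℕ) (a : ZMod n) (ε : ℕ → Bool) (q : ℕ) : ZMod n :=
  if q = 0 then a
  else if q < n - 1 then (if ε q then Lend n a ε q - 1 else Lend n a ε q + q)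
  else Lend n a ε (n - 1) + (n - 1 : ℕ)

lemma lcnt_succ (ε : ℕ → Bool) (k : ℕ) (hk : 1 ≤ k) :
    lcnt ε (k + 1) = lcnt ε k + (if ε k then 1 else 0) := by
  unfold lcnt
  rw [Nat.Ico_succ_right_eq_insert_Ico hk, Finset.filter_insert]
  by_cases h : ε k
  · simp [h, Finset.card_insert_of_notMem, Finset.mem_filter]
  · simp [h]

lemma Lend_succ (n : ℕ) (a : ZMod n) (ε : ℕ → Bool) (k : ℕ) (hk : 1 ≤ k) :
    Lend n a ε (k + 1) = if ε k then Lend n a ε k - 1 else Lend n a ε k := by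
  unfold Lend
  rw [lcnt_succ ε k hk]
  by_cases h : ε k <;> simp [h] <;> push_cast <;> ring

lemma natCast_inj (n : ℕ) (hn : 0 < n) {i j : ℕ} (hi : i < n) (hj : j < n)
    (h : (i : ZMod n) = j) : i = j := by
  haveI : NeZero n := ⟨hn.ne'⟩
  have := congrArg ZMod.val h
  rwa [ZMod.val_cast_of_lt hi, ZMod.val_cast_of_lt hj] at this

lemma cast_pred (n j : ℕ) (hj : 1 ≤ j) : ((j - 1 : ℕ) : ZMod n) = (j : ZMod n) - 1 := by
  push_cast [hj]; ring

lemma neg_one_cast (n : ℕ) (hn : 0 < n) : ((n - 1 : ℕ) : ZMod n) = -1 := by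
  rw [cast_pred n n hn, ZMod.natCast_self]; ring

/-- reindexing an interval. -/
lemma shift_interval (n : ℕ) (c : ZMod n) (k : ℕ) :
    (range (k + 1)).image (fun j : ℕ => c + (j : ℕ)) =
      insert c ((range k).image fun j : ℕ => (c + 1) + (j : ℕ)) := by
  ext x
  simp only [mem_image, mem_range, mem_insert]
  constructor
  · rintro ⟨j, hj, rfl⟩
    rcases Nat.eq_zero_or_pos j with h0 | h1
    · subst h0; left; simp
    · right; exact ⟨j - 1, by omega, by rw [cast_pred n j h1]; ring⟩
  · rintro (rfl | ⟨j, hj, rfl⟩)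
    · exact ⟨0, by omega, by simp⟩
    · exact ⟨j + 1, by omega, by push_cast; ring⟩

/-- interval containment: a `k`-interval inside a `(k+1)`-interval, `k+1 ≤ n−2`. -/
lemma contain (n : ℕ) {b c : ZMod n} {k : ℕ} (hk : 1 ≤ k) (hkn : k + 1 ≤ n - 2)
    (h : ∀ j < k, ∃ i < k + 1, c + (j : ℕ) = b + (i : ℕ)) : b = c ∨ b = c - 1 := by
  have hn : 2 ≤ n := by omega
  haveI : NeZero n := ⟨by omega⟩
  have key : ∀ j < k, ((c - b) + (j : ℕ) : ZMod n).val ≤ k := by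
    intro j hj
    obtain ⟨i, hi, hij⟩ := h j hj
    have : (c - b) + (j : ℕ) = (i : ℕ) := by
      have := hij; linear_combination this
    rw [this, ZMod.val_cast_of_lt (by omega : i < n)]
    omega
  set t := (c - b).val with ht
  have htn : t < n := ZMod.val_lt _
  have key2 : ∀ j < k, (t + j) % n ≤ k := by
    intro j hj
    have := key j hj
    rwa [ZMod.val_add, ZMod.val_cast_of_lt (by omega : j < n)] at this
  have ht1 : t ≤ 1 := by
    by_contra hcon
    push_neg at hcon
    rcases lt_or_ge (t + (k - 1)) n with hc | hc
    · have := key2 (k - 1) (by omega)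
      rw [Nat.mod_eq_of_lt hc] at this
      omega
    · have hj : n - t - 1 < k := by omega
      have := key2 (n - t - 1) hj
      have he : (t + (n - t - 1)) = n - 1 := by omega
      rw [he, Nat.mod_eq_of_lt (by omega)] at this
      omega
  interval_cases t
  · left
    have : c - b = 0 := by
      rw [← ZMod.val_eq_zero]; omega
    linear_combination -this
  · right
    have h1 : ((c - b).val : ZMod n) = c - b := ZMod.natCast_rightInverse _
    rw [← ht] at h1
    have : c - b = 1 := by rw [← h1]; norm_num
    linear_combination -this

/-- any element outside an interval: complement form. -/
lemma compl (n : ℕ) [NeZero n] {b x : ZMod n} {k : ℕ} (hk : k ≤ n)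
    (hx : ∀ j < k, x ≠ b + (j : ℕ)) : ∃ m, k ≤ m ∧ m < n ∧ x = b + (m : ℕ) := by
  have hxb : x = b + ((x - b).val : ℕ) := by
    have : ((x - b).val : ZMod n) = x - b := ZMod.natCast_rightInverse _
    linear_combination -this
  refine ⟨(x - b).val, ?_, ZMod.val_lt _, hxb⟩
  by_contra hcon
  push_neg at hcon
  exact hx _ hcon hxb


lemma cast_fword_aux (n : ℕ) (hn : 2 ≤ n) : ((n - 2 : ℕ) : ZMod n) = -2 := by
  have : ((n - 2 : ℕ) : ZMod n) = (n : ℕ) - 2 := by push_cast [hn]; ring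
  rw [this, ZMod.natCast_self]; ring

lemma lcnt_one (ε : ℕ → Bool) : lcnt ε 1 = 0 := by simp [lcnt]

lemma Lend_one (n : ℕ) (a : ZMod n) (ε : ℕ → Bool) : Lend n a ε 1 = a := by
  simp [Lend, lcnt_one]

lemma Fword_zero (n : ℕ) (a : ZMod n) (ε : ℕ → Bool) : Fword n a ε 0 = a := by
  simp [Fword]

lemma Fword_mid (n : ℕ) (a : ZMod n) (ε : ℕ → Bool) {q : ℕ} (h1 : 1 ≤ q) (h2 : q ≤ n - 2)
    (hn : 2 ≤ n) :
    Fword n a ε q = if ε q then Lend n a ε q - 1 else Lend n a ε q + q := by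
  rw [Fword, if_neg (by omega), if_pos (by omega)]

lemma Fword_last (n : ℕ) (a : ZMod n) (ε : ℕ → Bool) (hn : 2 ≤ n) :
    Fword n a ε (n - 1) = Lend n a ε (n - 1) + (n - 1 : ℕ) := by
  rw [Fword, if_neg (by omega), if_neg (by omega)]

lemma Fword_image (n : ℕ) (a : ZMod n) (ε : ℕ → Bool) (hn : 2 ≤ n) :
    ∀ k, 1 ≤ k → k ≤ n - 1 →
      (range k).image (Fword n a ε) = (range k).image fun j => Lend n a ε k + (j : ℕ) := by
  intro k
  induction k with
  | zero => omega
  | succ k ih =>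
    intro _ hk1
    rcases Nat.eq_zero_or_pos k with rfl | hk
    · simp [Fword_zero, Lend_one]
    · have ihh := ih hk (by omega)
      have hq2 : k ≤ n - 2 := by omega
      conv_lhs => rw [range_add_one, image_insert]
      rw [ihh, Fword_mid n a ε hk hq2 hn, Lend_succ n a ε k hk]
      by_cases h : ε k
      · rw [if_pos h, if_pos h, shift_interval]
        congr 1
        apply image_congr
        intro x _
        simp only
        ring_nf
      · rw [if_neg h, if_neg h]
        conv_rhs => rw [range_add_one, image_insert]

lemma Fword_notmem_interval (n : ℕ) (a : ZMod n) (ε : ℕ → Bool) (hn : 2 ≤ n)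
    {q j : ℕ} (h1 : 1 ≤ q) (h2 : q < n) (hj : j < q) :
    Fword n a ε q ≠ Lend n a ε q + (j : ℕ) := by
  intro hEq
  rcases le_or_gt q (n - 2) with hq | hq
  · rw [Fword_mid n a ε h1 hq hn] at hEq
    by_cases h : ε q
    · rw [if_pos h] at hEq
      have : ((j : ℕ) : ZMod n) = ((n - 1 : ℕ) : ZMod n) := by
        rw [neg_one_cast n (by omega)]
        linear_combination -hEq
      have := natCast_inj n (by omega) (by omega) (by omega) this
      omega
    · rw [if_neg h] at hEq
      have : ((j : ℕ) : ZMod n) = ((q : ℕ) : ZMod n) := by linear_combination -hEq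
      have := natCast_inj n (by omega) (by omega) (by omega) this
      omega
  · have hq' : q = n - 1 := by omega
    subst hq'
    rw [Fword_last n a ε hn] at hEq
    have : ((j : ℕ) : ZMod n) = ((n - 1 : ℕ) : ZMod n) := by linear_combination -hEq
    have := natCast_inj n (by omega) (by omega) (by omega) this
    omega

lemma Fword_inj (n : ℕ) (a : ZMod n) (ε : ℕ → Bool) (hn : 2 ≤ n)
    {q q' : ℕ} (hq : q < n) (hq' : q' < n) (h : Fword n a ε q = Fword n a ε q') :
    q = q' := by
  by_contra hne
  wlog hlt : q < q' generalizing q q'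
  · exact this hq' hq h.symm (Ne.symm hne) (by omega)
  · have h1 : Fword n a ε q ∈ (range q').image (Fword n a ε) :=
      mem_image_of_mem _ (mem_range.mpr hlt)
    rw [Fword_image n a ε hn q' (by omega) (by omega)] at h1
    simp only [mem_image, mem_range] at h1
    obtain ⟨j, hjq, hj⟩ := h1
    exact Fword_notmem_interval n a ε hn (by omega) hq' hjq (h ▸ hj.symm)


end SArcAux
namespace SArcAux

lemma absValZ_inj {n : ℕ} (hn : 2 ≤ n) (w : Equiv.Perm (Fin n × Bool))
    (hs : IsSignedPerm w) {q q' : ℕ} (hq : q < n) (hq' : q' < n)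
    (h : absValZ n w q = absValZ n w q') : q = q' := by
  haveI : NeZero n := ⟨by omega⟩
  unfold absValZ oneLine at h
  rw [dif_pos hq, dif_pos hq'] at h
  set x := w (⟨q, hq⟩, false) with hx
  set y := w (⟨q', hq'⟩, false) with hy
  have h1 : ((x.1 : ℕ) : ZMod n) = ((y.1 : ℕ) : ZMod n) := by
    push_cast at h ⊢
    linear_combination h
  have h2 : x.1 = y.1 := by
    have := natCast_inj n (by omega) x.1.isLt y.1.isLt h1
    exact Fin.ext this
  by_cases h3 : x.2 = y.2
  · have hxy : x = y := Prod.ext h2 h3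
    have := w.injective (hx ▸ hy ▸ hxy)
    simpa using this
  · have h4 : x.2 = !y.2 := by
      cases hx2 : x.2 <;> cases hy2 : y.2 <;> simp_all
    have h6 : w (⟨q', hq'⟩, true) = x := by
      have h5 := hs (⟨q', hq'⟩, false)
      simp only [Bool.not_false] at h5
      rw [h5]
      exact Prod.ext h2.symm h4.symm
    have := w.injective (h6.trans hx)
    simp at this

lemma masterH {n : ℕ} (hn : 2 ≤ n) (w : Equiv.Perm (Fin n × Bool))
    (hs : IsSignedPerm w) (ha : IsSignedArc w) :
    ∀ k, 1 ≤ k → k ≤ n - 1 →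
      ((range k).image (fun q => absValZ n w q)
         = (range k).image fun j =>
             Lend n (absValZ n w 0) (fun p => (oneLine w p).2) k + (j : ℕ))
      ∧ ∀ q, 1 ≤ q → q < k →
          absValZ n w q = Fword n (absValZ n w 0) (fun p => (oneLine w p).2) q := by
  haveI : NeZero n := ⟨by omega⟩
  set a := absValZ n w 0 with ha0
  set ε := fun p => (oneLine w p).2 with hε0
  set v := fun q => absValZ n w q with hv0
  intro k
  induction k with
  | zero => omega
  | succ k ih =>
    intro _ hk1
    rcases Nat.eq_zero_or_pos k with rfl | hk
    · constructor
      · simp [Lend_one]; rfl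
      · omega
    · obtain ⟨hP, hF⟩ := ih hk (by omega)
      set L := Lend n a ε k with hL0
      have hvinj : ∀ j < k, v k ≠ L + (j : ℕ) := by
        intro j hj hEq
        have hmem : v k ∈ (range k).image (fun q => absValZ n w q) := by
          rw [hP]
          exact mem_image.mpr ⟨j, mem_range.mpr hj, hEq.symm⟩
        obtain ⟨j', hj', hjv⟩ := mem_image.mp hmem
        rw [mem_range] at hj'
        have := absValZ_inj hn w hs (by omega : j' < n) (by omega : k < n) hjv
        omega
      obtain ⟨m, hmk, hmn, hvm⟩ := compl n (by omega : k ≤ n) hvinj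
      have hεdef : ∀ p, (oneLine w p).2 = ε p := fun p => rfl
      have hm : m = k ∨ m = n - 1 := by
        rcases le_or_gt k (n - 3) with hk3 | hk3
        · obtain ⟨b, hb⟩ := (ha (k + 2) (by omega) (by omega)).1
          rw [show k + 2 - 1 = k + 1 by omega] at hb
          have hsub : ∀ j < k, ∃ i < k + 1, L + (j : ℕ) = b + (i : ℕ) := by
            intro j hj
            have h1 : L + (j : ℕ) ∈ (range k).image (fun q => absValZ n w q) := by
              rw [hP]; exact mem_image.mpr ⟨j, mem_range.mpr hj, rfl⟩
            have h2 : L + (j : ℕ) ∈ (range (k + 1)).image (fun q => absValZ n w q) :=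
              Finset.image_subset_image (Finset.range_subset_range.mpr (by omega)) h1
            rw [hb] at h2
            obtain ⟨i, hi, hie⟩ := mem_image.mp h2
            exact ⟨i, mem_range.mp hi, hie.symm⟩
          have hbL := contain n hk (by omega) hsub
          have hvk : v k ∈ (range (k + 1)).image (fun q => absValZ n w q) :=
            mem_image.mpr ⟨k, mem_range.mpr (by omega), rfl⟩
          rw [hb] at hvk
          obtain ⟨i, hi, hie⟩ := mem_image.mp hvk
          rw [mem_range] at hi
          rcases hbL with hbL | hbL
          · left
            rw [hbL] at hie
            have : ((i : ℕ) : ZMod n) = ((m : ℕ) : ZMod n) := by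
              linear_combination hie + hvm
            have := natCast_inj n (by omega) (by omega) (by omega) this
            omega
          · rcases Nat.eq_zero_or_pos i with rfl | hi1
            · right
              have hie0 : L - 1 = v k := by
                rw [hbL] at hie; simpa using hie
              have : ((m : ℕ) : ZMod n) = ((n - 1 : ℕ) : ZMod n) := by
                rw [neg_one_cast n (by omega)]
                linear_combination - hvm - hie0
              have := natCast_inj n (by omega) (by omega) (by omega) this
              omega
            · exfalso
              refine hvinj (i - 1) (by omega) ?_
              rw [← hie, hbL, cast_pred n i hi1]
              ring
        · omega
      obtain ⟨-, hb1, hb2⟩ := ha (k + 1) (by omega) (by omega)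
      rw [show k + 1 - 1 = k by omega] at hb1 hb2
      rcases hm with hmEq | hmEq
      · -- extension to the right, sign false
        have hvk : v k = L + (k : ℕ) := by rw [hvm, hmEq]
        have hεk : ε k = false := by
          rw [← hεdef k]
          refine hb1 ?_
          rw [hP]
          refine mem_image.mpr ⟨k - 1, mem_range.mpr (by omega), ?_⟩
          show L + ((k - 1 : ℕ) : ZMod n) = absValZ n w k - 1
          rw [cast_pred n k hk]
          have : absValZ n w k = L + (k : ℕ) := hvk
          rw [this]; ring
        have hFk : Fword n a ε k = L + (k : ℕ) := by
          rw [Fword_mid n a ε hk (by omega) hn, if_neg (by simp [hεk])]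
        refine ⟨?_, ?_⟩
        · conv_lhs => rw [range_add_one, image_insert]
          rw [hP, Lend_succ n a ε k hk, if_neg (by simp [hεk])]
          conv_rhs => rw [range_add_one, image_insert]
          rw [← hL0, hvk]
        · intro q hq1 hqk
          rcases lt_or_eq_of_le (by omega : q ≤ k) with hlt | rfl
          · exact hF q hq1 hlt
          · rw [hFk]; exact hvk
      · -- extension to the left, sign true
        have hvk : v k = L - 1 := by
          rw [hvm, hmEq, neg_one_cast n (by omega)]; ring
        have hεk : ε k = true := by
          rw [← hεdef k]
          refine hb2 ?_
          rw [hP]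
          refine mem_image.mpr ⟨0, mem_range.mpr (by omega), ?_⟩
          show L + ((0 : ℕ) : ZMod n) = absValZ n w k + 1
          have : absValZ n w k = L - 1 := hvk
          rw [this]; push_cast; ring
        have hFk : Fword n a ε k = L - 1 := by
          rw [Fword_mid n a ε hk (by omega) hn, if_pos hεk]
        refine ⟨?_, ?_⟩
        · conv_lhs => rw [range_add_one, image_insert]
          rw [hP, Lend_succ n a ε k hk, if_pos hεk, shift_interval]
          rw [← hL0, hvk]
          congr 1
          apply image_congr
          intro x _
          simp only
          ring_nf
        · intro q hq1 hqk
          rcases lt_or_eq_of_le (by omega : q ≤ k) with hlt | rfl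
          · exact hF q hq1 hlt
          · rw [hFk]; exact hvk

lemma master {n : ℕ} (hn : 2 ≤ n) (w : Equiv.Perm (Fin n × Bool))
    (hs : IsSignedPerm w) (ha : IsSignedArc w) :
    ∀ q, q < n →
      absValZ n w q = Fword n (absValZ n w 0) (fun p => (oneLine w p).2) q := by
  haveI : NeZero n := ⟨by omega⟩
  intro q hq
  rcases Nat.eq_zero_or_pos q with rfl | hq1
  · rw [Fword_zero]
  · rcases lt_or_eq_of_le (by omega : q ≤ n - 1) with hlt | rfl
    · exact (masterH hn w hs ha (n - 1) (by omega) (le_refl _)).2 q hq1 hlt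
    · obtain ⟨hP, -⟩ := masterH hn w hs ha (n - 1) (by omega) (le_refl _)
      have hvinj : ∀ j < n - 1,
          absValZ n w (n - 1) ≠ Lend n (absValZ n w 0) (fun p => (oneLine w p).2) (n - 1)
            + (j : ℕ) := by
        intro j hj hEq
        have hmem : absValZ n w (n - 1) ∈ (range (n - 1)).image (fun q => absValZ n w q) := by
          rw [hP]; exact mem_image.mpr ⟨j, mem_range.mpr hj, hEq.symm⟩
        obtain ⟨j', hj', hjv⟩ := mem_image.mp hmem
        rw [mem_range] at hj'
        have := absValZ_inj hn w hs (by omega : j' < n) (by omega : n - 1 < n) hjv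
        omega
      obtain ⟨m, hmk, hmn, hvm⟩ := compl n (by omega : n - 1 ≤ n) hvinj
      have hm : m = n - 1 := by omega
      rw [hvm, hm, Fword_last n _ _ hn]

def epsN (n : ℕ) (ε : Fin n → Bool) : ℕ → Bool := fun q => if h : q < n then ε ⟨q, h⟩ else false

lemma epsN_lt (n : ℕ) (ε : Fin n → Bool) {q : ℕ} (h : q < n) : epsN n ε q = ε ⟨q, h⟩ :=
  dif_pos h

def phiFun (n : ℕ) (hn : 2 ≤ n) (a : ZMod n) (ε : Fin n → Bool) :
    Fin n × Bool → Fin n × Bool := fun p =>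
  (⟨(Fword n a (epsN n ε) (p.1 : ℕ) - 1).val,
      @ZMod.val_lt n ⟨by omega⟩ _⟩, xor p.2 (ε p.1))

lemma phiFun_inj (n : ℕ) (hn : 2 ≤ n) (a : ZMod n) (ε : Fin n → Bool) :
    Function.Injective (phiFun n hn a ε) := by
  haveI : NeZero n := ⟨by omega⟩
  rintro ⟨q, c⟩ ⟨q', c'⟩ h
  simp only [phiFun, Prod.mk.injEq, Fin.mk.injEq] at h
  obtain ⟨h1, h2⟩ := h
  have hF : Fword n a (epsN n ε) (q : ℕ) - 1 = Fword n a (epsN n ε) (q' : ℕ) - 1 := by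
    have e1 := ZMod.natCast_rightInverse (n := n) (Fword n a (epsN n ε) (q : ℕ) - 1)
    have e2 := ZMod.natCast_rightInverse (n := n) (Fword n a (epsN n ε) (q' : ℕ) - 1)
    rw [← e1, ← e2, h1]
  have hFq : Fword n a (epsN n ε) (q : ℕ) = Fword n a (epsN n ε) (q' : ℕ) := by
    linear_combination hF
  have hq : (q : ℕ) = (q' : ℕ) := Fword_inj n a (epsN n ε) hn q.isLt q'.isLt hFq
  have hqq : q = q' := Fin.ext hq
  subst hqq
  have hc : c = c' := by
    cases ε q <;> cases c <;> cases c' <;> simp_all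
  rw [hc]
noncomputable def phiPerm (n : ℕ) (hn : 2 ≤ n) (a : ZMod n) (ε : Fin n → Bool) :
    Equiv.Perm (Fin n × Bool) :=
  Equiv.ofBijective _ ((Finite.injective_iff_bijective).mp (phiFun_inj n hn a ε))

lemma phiPerm_apply (n : ℕ) (hn : 2 ≤ n) (a : ZMod n) (ε : Fin n → Bool)
    (p : Fin n × Bool) : phiPerm n hn a ε p = phiFun n hn a ε p := rfl

lemma oneLine_phi (n : ℕ) (hn : 2 ≤ n) (a : ZMod n) (ε : Fin n → Bool)
    {q : ℕ} (hq : q < n) :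
    oneLine (phiPerm n hn a ε) q = ((Fword n a (epsN n ε) q - 1).val, ε ⟨q, hq⟩) := by
  rw [oneLine, dif_pos hq, phiPerm_apply]
  simp [phiFun]

lemma absValZ_phi (n : ℕ) (hn : 2 ≤ n) (a : ZMod n) (ε : Fin n → Bool)
    {q : ℕ} (hq : q < n) :
    absValZ n (phiPerm n hn a ε) q = Fword n a (epsN n ε) q := by
  haveI : NeZero n := ⟨by omega⟩
  rw [absValZ, oneLine_phi n hn a ε hq]
  push_cast
  rw [ZMod.natCast_rightInverse (Fword n a (epsN n ε) q - 1)]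
  ring

lemma phi_isSignedPerm (n : ℕ) (hn : 2 ≤ n) (a : ZMod n) (ε : Fin n → Bool) :
    IsSignedPerm (phiPerm n hn a ε) := by
  rintro ⟨q, c⟩
  rw [phiPerm_apply, phiPerm_apply]
  refine Prod.ext rfl ?_
  show xor (!c) (ε q) = !(xor c (ε q))
  cases c <;> cases ε q <;> rfl

lemma phi_isSignedArc (n : ℕ) (hn : 2 ≤ n) (a : ZMod n) (ε : Fin n → Bool) :
    IsSignedArc (phiPerm n hn a ε) := by
  haveI : NeZero n := ⟨by omega⟩
  intro i h2 hin
  have hi1 : 1 ≤ i - 1 := by omega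
  have hi2 : i - 1 ≤ n - 2 := by omega
  have hiq : i - 1 < n := by omega
  have himg : ((range (i - 1)).image fun q => absValZ n (phiPerm n hn a ε) q)
      = (range (i - 1)).image (Fword n a (epsN n ε)) := by
    apply image_congr
    intro x hx
    rw [Finset.mem_coe, mem_range] at hx
    exact absValZ_phi n hn a ε (by omega)
  refine ⟨⟨Lend n a (epsN n ε) (i - 1), by
      rw [himg, Fword_image n a (epsN n ε) hn (i - 1) hi1 (by omega)]⟩, ?_, ?_⟩
  · intro hmem
    rw [himg, Fword_image n a (epsN n ε) hn (i - 1) hi1 (by omega),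
      absValZ_phi n hn a ε hiq] at hmem
    obtain ⟨j, hj, hje⟩ := mem_image.mp hmem
    rw [mem_range] at hj
    rw [oneLine_phi n hn a ε hiq]
    show ε ⟨i - 1, hiq⟩ = false
    by_contra hcon
    have hεn : epsN n ε (i - 1) = true := by
      rw [epsN_lt n ε hiq]
      exact Bool.not_eq_false _ |>.mp hcon
    rw [Fword_mid n a (epsN n ε) hi1 hi2 hn, if_pos hεn] at hje
    have : ((j : ℕ) : ZMod n) = ((n - 2 : ℕ) : ZMod n) := by
      rw [cast_fword_aux n hn]
      linear_combination hje
    have := natCast_inj n (by omega) (by omega) (by omega) this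
    omega
  · intro hmem
    rw [himg, Fword_image n a (epsN n ε) hn (i - 1) hi1 (by omega),
      absValZ_phi n hn a ε hiq] at hmem
    obtain ⟨j, hj, hje⟩ := mem_image.mp hmem
    rw [mem_range] at hj
    rw [oneLine_phi n hn a ε hiq]
    show ε ⟨i - 1, hiq⟩ = true
    by_contra hcon
    have hεn : epsN n ε (i - 1) = false := by
      rw [epsN_lt n ε hiq]
      exact Bool.not_eq_true _ |>.mp hcon
    rw [Fword_mid n a (epsN n ε) hi1 hi2 hn, if_neg (by simp [hεn])] at hje
    have : ((j : ℕ) : ZMod n) = ((i - 1 + 1 : ℕ) : ZMod n) := by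
      push_cast
      linear_combination hje
    have := natCast_inj n (by omega) (by omega) (by omega) this
    omega
lemma lcnt_congr (ε ε' : ℕ → Bool) (k : ℕ) (h : ∀ p, p < k → ε p = ε' p) :
    lcnt ε k = lcnt ε' k := by
  unfold lcnt
  congr 1
  apply Finset.filter_congr
  intro x hx
  rw [Finset.mem_Ico] at hx
  rw [h x hx.2]

lemma Lend_congr (n : ℕ) (a : ZMod n) (ε ε' : ℕ → Bool) (k : ℕ)
    (h : ∀ p, p < k → ε p = ε' p) : Lend n a ε k = Lend n a ε' k := by
  unfold Lend
  rw [lcnt_congr ε ε' k h]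

lemma Fword_congr (n : ℕ) (a : ZMod n) (ε ε' : ℕ → Bool) {q : ℕ}
    (h : ∀ p, p < n → ε p = ε' p) (hq : q < n) :
    Fword n a ε q = Fword n a ε' q := by
  unfold Fword
  rw [Lend_congr n a ε ε' q (fun p hp => h p (by omega)),
    Lend_congr n a ε ε' (n - 1) (fun p hp => h p (by omega)), h q hq]

lemma phi_surj_eq (n : ℕ) (hn : 2 ≤ n) (w : Equiv.Perm (Fin n × Bool))
    (hs : IsSignedPerm w) (ha : IsSignedArc w) :
    phiPerm n hn (absValZ n w 0) (fun q : Fin n => (oneLine w (q : ℕ)).2) = w := by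
  haveI : NeZero n := ⟨by omega⟩
  set a := absValZ n w 0 with ha0
  set εF := fun q : Fin n => (oneLine w (q : ℕ)).2 with hεF
  have hagree : ∀ p, p < n → epsN n εF p = (fun p => (oneLine w p).2) p := by
    intro p hp
    rw [epsN_lt n εF hp]
  have key : ∀ q : Fin n, phiPerm n hn a εF (q, false) = w (q, false) := by
    intro q
    have hm := master hn w hs ha (q : ℕ) q.isLt
    have hF : Fword n a (epsN n εF) (q : ℕ) = Fword n a (fun p => (oneLine w p).2) (q : ℕ) :=
      Fword_congr n a _ _ hagree q.isLt
    refine Prod.ext ?_ ?_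
    · apply Fin.ext
      show (Fword n a (epsN n εF) (q : ℕ) - 1).val = ((w (q, false)).1 : ℕ)
      rw [hF]
      have hm' : ((((w (q, false)).1 : ℕ) + 1 : ℕ) : ZMod n)
          = Fword n a (fun p => (oneLine w p).2) (q : ℕ) := by
        rw [← hm, absValZ, oneLine, dif_pos q.isLt]
      have hcast : ((((w (q, false)).1 : ℕ)) : ZMod n)
          = Fword n a (fun p => (oneLine w p).2) (q : ℕ) - 1 := by
        push_cast at hm'
        linear_combination hm'
      rw [← hcast, ZMod.val_cast_of_lt (w (q, false)).1.isLt]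
    · show xor false (εF q) = (w (q, false)).2
      rw [Bool.false_xor, hεF]
      show (oneLine w (q : ℕ)).2 = _
      rw [oneLine, dif_pos q.isLt]
  apply Equiv.ext
  rintro ⟨q, c⟩
  cases c
  · exact key q
  · have h1 := hs (q, false)
    have h2 := phi_isSignedPerm n hn a εF (q, false)
    simp only [Bool.not_false] at h1 h2
    rw [h2, h1, key q]

end SArcAux

open SArcAux in
/-- For `n ≥ 2`, the number of signed arc permutations in `B_n` equals `n · 2^n`. -/
theorem card_signedArc (n : ℕ) (hn : 2 ≤ n) :
    Nat.card { w : Equiv.Perm (Fin n × Bool) // IsSignedPerm w ∧ IsSignedArc w }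
      = n * 2 ^ n := by
  haveI : NeZero n := ⟨by omega⟩
  set T := ZMod n × (Fin n → Bool) with hT
  set S := { w : Equiv.Perm (Fin n × Bool) // IsSignedPerm w ∧ IsSignedArc w } with hS
  let Φ : T → S := fun p => ⟨phiPerm n hn p.1 p.2,
    phi_isSignedPerm n hn p.1 p.2, phi_isSignedArc n hn p.1 p.2⟩
  have hinj : Function.Injective Φ := by
    rintro ⟨a, ε⟩ ⟨a', ε'⟩ h
    have hperm : phiPerm n hn a ε = phiPerm n hn a' ε' := congrArg Subtype.val h
    have hA : ∀ (b : ZMod n) (e : Fin n → Bool), absValZ n (phiPerm n hn b e) 0 = b := by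
      intro b e
      rw [absValZ_phi n hn b e (by omega : 0 < n), Fword_zero]
    have ha : a = a' := by
      rw [← hA a ε, ← hA a' ε', hperm]
    have hE : ∀ (b : ZMod n) (e : Fin n → Bool) (q : Fin n),
        (oneLine (phiPerm n hn b e) (q : ℕ)).2 = e q := by
      intro b e q
      rw [oneLine_phi n hn b e q.isLt]
    have hε : ε = ε' := by
      funext q
      rw [← hE a ε q, ← hE a' ε' q, hperm]
    rw [Prod.mk.injEq]
    exact ⟨ha, hε⟩
  have hsurj : Function.Surjective Φ := by
    rintro ⟨w, hsp, hsa⟩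
    refine ⟨(absValZ n w 0, fun q : Fin n => (oneLine w (q : ℕ)).2), ?_⟩
    exact Subtype.ext (phi_surj_eq n hn w hsp hsa)
  have := Nat.card_congr (Equiv.ofBijective Φ ⟨hinj, hsurj⟩)
  rw [← this, hT]
  rw [Nat.card_eq_fintype_card]
  simp [ZMod.card]
end

section
/- For every odd positive integer k and every positive integer n, the generating function identity Σ_{d | k} Σ_{n ≥ 1} (1/n) L^B_d(x^n, y^n) t^{nd} = Σ_{n ≥ 1} (1/(2n)) ( (p⁺_{n/(n,k)}(x,y))^{(n,k)} + (p⁻_{n/(n,k)}(x,y))^{(n,k)} ) t^n holds, where (n,k) = gcd(n,k). -/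
open Finset Classical

/-- The coefficient of the monomial `m` (in variables `x_i = (false, i)`,
`y_i = (true, i)`) in the `j`-th power of the "mixed" power sum
`Σ_i (x_i^e + c · y_i^e)`.  For `c = 1` this is `(p⁺_e(x,y))^j`, for `c = −1` it is
`(p⁻_e(x,y))^j`, and for `c = (−1)^e` it is `(p_e(x,−y))^j`. -/
noncomputable def pmixPowCoeff (c : ℚ) (e j : ℕ) (m : (Bool × ℕ) →₀ ℕ) : ℚ :=
  ∑ᶠ g : Fin j → Bool × ℕ,
    if (∑ i : Fin j, Finsupp.single (g i) e) = m then
      c ^ (Finset.univ.filter fun i : Fin j => (g i).1 = true).card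
    else 0

/-- The coefficient of the monomial `m` in `L^B_d(x,y) = (L_d(x,y) + L_d(x,−y))/2`,
the generating function of primitive necklaces of length `d` over the alphabet
`{x_i} ∪ {y_i}` with an even number of `y` variables, where
`L_d = (1/d) Σ_{e | d} μ(e) (p_e)^{d/e}` (with `μ` the number-theoretic Möbius
function). -/
noncomputable def LBCoeff (d : ℕ) (m : (Bool × ℕ) →₀ ℕ) : ℚ :=
  (1 / (2 * (d : ℚ))) *
    ∑ e ∈ d.divisors,
      ((ArithmeticFunction.moebius e : ℤ) : ℚ) *
        (pmixPowCoeff 1 e (d / e) m + pmixPowCoeff ((-1 : ℚ) ^ e) e (d / e) m)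

/-- The coefficient of the monomial `m` in `f(x^r, y^r)`, the substitution of every
variable by its `r`-th power in the series with coefficient function `f`. -/
noncomputable def substPowCoeff (f : ((Bool × ℕ) →₀ ℕ) → ℚ) (r : ℕ)
    (m : (Bool × ℕ) →₀ ℕ) : ℚ :=
  ∑ᶠ m' : (Bool × ℕ) →₀ ℕ, if r • m' = m then f m' else 0

lemma smul_inj_finsupp {r : ℕ} (hr : 0 < r) :
    Function.Injective (fun m : (Bool × ℕ) →₀ ℕ => r • m) := by
  intro a b h
  ext x
  have := DFunLike.congr_fun h x
  simp only [Finsupp.smul_apply, smul_eq_mul] at this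
  exact Nat.eq_of_mul_eq_mul_left hr this

lemma sum_single_smul (e r j : ℕ) (g : Fin j → Bool × ℕ) :
    (∑ i : Fin j, Finsupp.single (g i) (r * e)) = r • ∑ i : Fin j, Finsupp.single (g i) e := by
  rw [Finset.smul_sum]
  refine Finset.sum_congr rfl fun i _ => ?_
  rw [Finsupp.smul_single, smul_eq_mul]

lemma subst_of_smul_eq (f : ((Bool × ℕ) →₀ ℕ) → ℚ) {r : ℕ} (hr : 0 < r)
    {m m₀ : (Bool × ℕ) →₀ ℕ} (h : r • m₀ = m) : substPowCoeff f r m = f m₀ := by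
  unfold substPowCoeff
  rw [finsum_eq_single _ m₀, if_pos h]
  intro x hx
  rw [if_neg]
  intro hc
  exact hx (smul_inj_finsupp hr (hc.trans h.symm))

lemma subst_of_not_smul (f : ((Bool × ℕ) →₀ ℕ) → ℚ) {r : ℕ}
    {m : (Bool × ℕ) →₀ ℕ} (h : ¬ ∃ m₀, r • m₀ = m) : substPowCoeff f r m = 0 := by
  unfold substPowCoeff
  apply finsum_eq_zero_of_forall_eq_zero
  intro x
  rw [if_neg fun hc => h ⟨x, hc⟩]

lemma pmix_smul (c : ℚ) (e j : ℕ) {r : ℕ} (hr : 0 < r) (m₀ : (Bool × ℕ) →₀ ℕ) :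
    pmixPowCoeff c (r * e) j (r • m₀) = pmixPowCoeff c e j m₀ := by
  unfold pmixPowCoeff
  refine finsum_congr fun g => ?_
  refine if_congr ?_ rfl rfl
  rw [sum_single_smul]
  exact ⟨fun h => smul_inj_finsupp hr h, fun h => by rw [h]⟩

lemma substPow_pmix (c : ℚ) (e j : ℕ) {r : ℕ} (hr : 0 < r) (m : (Bool × ℕ) →₀ ℕ) :
    substPowCoeff (pmixPowCoeff c e j) r m = pmixPowCoeff c (r * e) j m := by
  by_cases h : ∃ m₀, r • m₀ = m
  · obtain ⟨m₀, hm₀⟩ := h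
    rw [subst_of_smul_eq _ hr hm₀, ← hm₀, pmix_smul c e j hr]
  · rw [subst_of_not_smul _ h]
    unfold pmixPowCoeff
    symm
    apply finsum_eq_zero_of_forall_eq_zero
    intro g
    rw [if_neg]
    intro hc
    exact h ⟨∑ i : Fin j, Finsupp.single (g i) e, by rw [← sum_single_smul, hc]⟩

lemma substPow_LB (d : ℕ) {r : ℕ} (hr : 0 < r) (m : (Bool × ℕ) →₀ ℕ) :
    substPowCoeff (LBCoeff d) r m
      = (1 / (2 * (d : ℚ))) *
          ∑ e ∈ d.divisors,
            ((ArithmeticFunction.moebius e : ℤ) : ℚ) *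
              (pmixPowCoeff 1 (r * e) (d / e) m
                + pmixPowCoeff ((-1 : ℚ) ^ e) (r * e) (d / e) m) := by
  by_cases h : ∃ m₀, r • m₀ = m
  · obtain ⟨m₀, hm₀⟩ := h
    rw [subst_of_smul_eq _ hr hm₀, LBCoeff]
    congr 1
    refine Finset.sum_congr rfl fun e _ => ?_
    rw [← hm₀, pmix_smul 1 e _ hr, pmix_smul _ e _ hr]
  · rw [subst_of_not_smul _ h]
    have hz : ∀ (c : ℚ) (e j : ℕ), pmixPowCoeff c (r * e) j m = 0 := by
      intro c e j
      rw [← substPow_pmix c e j hr m, subst_of_not_smul _ h]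
    simp [hz]

/-- For every odd positive integer `k`, the generating function identity
`Σ_{d | k} Σ_{n ≥ 1} (1/n) L^B_d(x^n, y^n) t^{nd}
  = Σ_{n ≥ 1} (1/(2n)) ((p⁺_{n/(n,k)}(x,y))^{(n,k)} + (p⁻_{n/(n,k)}(x,y))^{(n,k)}) t^n`
holds; equivalently, the coefficients of `t^N` agree for every `N ≥ 1` (the pairs
`(d, n)` with `nd = N` are the divisors `d` of both `k` and `N`, with `n = N/d`). -/
theorem necklace_generating_identity (k : ℕ) (hk : Odd k) (hk0 : 0 < k)
    (N : ℕ) (hN : 1 ≤ N) (m : (Bool × ℕ) →₀ ℕ) :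
    (∑ d ∈ k.divisors.filter (· ∣ N), ((d : ℚ) / (N : ℚ)) * substPowCoeff (LBCoeff d) (N / d) m)
      = (1 / (2 * (N : ℚ))) *
          (pmixPowCoeff 1 (N / Nat.gcd N k) (Nat.gcd N k) m
            + pmixPowCoeff (-1) (N / Nat.gcd N k) (Nat.gcd N k) m) := by
  set G := Nat.gcd N k with hG
  have hG0 : 0 < G := Nat.gcd_pos_of_pos_left k (Nat.lt_of_lt_of_le Nat.zero_lt_one hN)
  have hN0 : 0 < N := Nat.lt_of_lt_of_le Nat.zero_lt_one hN
  -- the index set is the divisors of G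
  have hset : k.divisors.filter (· ∣ N) = G.divisors := by
    ext d
    simp only [Finset.mem_filter, Nat.mem_divisors, hG]
    constructor
    · rintro ⟨⟨hdk, -⟩, hdN⟩
      exact ⟨Nat.dvd_gcd hdN hdk, hG0.ne'⟩
    · rintro ⟨hdG, -⟩
      exact ⟨⟨hdG.trans (Nat.gcd_dvd_right N k), hk0.ne'⟩, hdG.trans (Nat.gcd_dvd_left N k)⟩
  set Q : ℕ → ℚ := fun j =>
    pmixPowCoeff 1 (N / j) j m + pmixPowCoeff (-1) (N / j) j m with hQ
  have key : ∀ d ∈ G.divisors,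
      ((d : ℚ) / (N : ℚ)) * substPowCoeff (LBCoeff d) (N / d) m
        = (1 / (2 * (N : ℚ))) *
            ∑ x ∈ d.divisorsAntidiagonal,
              (ArithmeticFunction.moebius x.1) • Q x.2 := by
    intro d hd
    rw [Nat.mem_divisors] at hd
    have hdN : d ∣ N := hd.1.trans (Nat.gcd_dvd_left N k)
    have hd0 : 0 < d := Nat.pos_of_dvd_of_pos hd.1 hG0
    have hr : 0 < N / d := Nat.div_pos (Nat.le_of_dvd hN0 hdN) hd0
    rw [substPow_LB d hr m]
    have hsum : ∑ e ∈ d.divisors,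
        ((ArithmeticFunction.moebius e : ℤ) : ℚ) *
          (pmixPowCoeff 1 (N / d * e) (d / e) m
            + pmixPowCoeff ((-1 : ℚ) ^ e) (N / d * e) (d / e) m)
        = ∑ x ∈ d.divisorsAntidiagonal, (ArithmeticFunction.moebius x.1) • Q x.2 := by
      rw [Nat.sum_divisorsAntidiagonal (fun e j => (ArithmeticFunction.moebius e) • Q j)]
      refine Finset.sum_congr rfl fun e he => ?_
      rw [Nat.mem_divisors] at he
      have hed : e ∣ d := he.1
      have he0 : 0 < e := Nat.pos_of_dvd_of_pos hed hd0
      -- e is odd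
      have hek : e ∣ k := hed.trans (hd.1.trans (Nat.gcd_dvd_right N k))
      have hodd : Odd e := by
        obtain ⟨t, rfl⟩ := hek
        rcases Nat.even_or_odd e with he2 | he2
        · exact absurd (he2.mul_right t) (Nat.not_even_iff_odd.mpr hk)
        · exact he2
      have hpow : ((-1 : ℚ)) ^ e = -1 := hodd.neg_one_pow
      -- N / d * e = N / (d / e)
      have harith : N / d * e = N / (d / e) := by
        obtain ⟨j, hj⟩ := hed
        obtain ⟨t, ht⟩ := hdN
        have hj0 : 0 < j := by
          rcases Nat.eq_zero_or_pos j with h0 | h0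
          · subst h0; simp at hj; omega
          · exact h0
        subst hj ht
        rw [Nat.mul_div_cancel_left _ (Nat.mul_pos he0 hj0),
          Nat.mul_div_cancel_left _ he0]
        rw [show e * j * t = j * (e * t) by ring, Nat.mul_div_cancel_left _ hj0]
        try ring
      rw [hpow, harith, hQ, zsmul_eq_mul]
    rw [hsum]
    have hd0' : (d : ℚ) ≠ 0 := Nat.cast_ne_zero.mpr hd0.ne'
    have hN0' : (N : ℚ) ≠ 0 := Nat.cast_ne_zero.mpr hN0.ne'
    rw [← mul_assoc]
    congr 1
    field_simp
  rw [hset, Finset.sum_congr rfl key, ← Finset.mul_sum]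
  congr 1
  -- Möbius inversion
  have := (ArithmeticFunction.sum_eq_iff_sum_smul_moebius_eq
      (f := fun d => ∑ x ∈ d.divisorsAntidiagonal, (ArithmeticFunction.moebius x.1) • Q x.2)
      (g := Q)).mpr (fun n _ => rfl) G hG0
  rw [this]
end
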